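/- arXiv:math/0606004 — 4 statements merged into one kernel-verified Lean document; each statement's English description precedes it below -/
import Mathlib

section
/- Let G be a group, F a subgroup with G₂ ⊆ F ⊆ Z(G), and Γ a subgroup of G with Γ ∩ F = {1}. Let X = G/Γ be the coset space with projection π: G → X, and set 𝒫_X = π^{[2]}(G^{[2,1]}·F^{[2]}) and 𝒬_X = π^{[3]}(G^{[3,2]}·F^{[3,1]}), where π^{[2]} and π^{[3]} apply π coordinatewise. Then (𝒫_X,𝒬_X) is a strong parallelepiped structure on X. -/
open scoped Pointwise

namespace HK

/-- Quadruples of elements of `X`, indexed by the vertices `00, 01, 10, 11` of the square. -/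
abbrev Quad (X : Type) := X × X × X × X

/-- Vertices of the cube `{0,1}³`. -/
abbrev Vtx := Fin 3 → Bool

/-- Elements of `X^{[3]} = X⁸`, indexed by the vertices of the cube. -/
abbrev Cube (X : Type) := Vtx → X

variable {X Y : Type}

/-- Apply a map coordinatewise to a quadruple. -/
def map4 (f : X → Y) (p : Quad X) : Quad Y := (f p.1, f p.2.1, f p.2.2.1, f p.2.2.2)

/-- Apply a map coordinatewise to a cube. -/
def mapCube (f : X → Y) (x : Cube X) : Cube Y := fun v => f (x v)

/-- A weak parallelogram structure: the relation `(x00,x01) ∼ (x10,x11) ↔ (x00,x01,x10,x11) ∈ P`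
is an equivalence relation, `P` is invariant under exchanging the two middle entries, and
any three points can be completed to a parallelogram. -/
def IsWeakParallelogram (P : Set (Quad X)) : Prop :=
  (∀ a b : X, (a, b, a, b) ∈ P) ∧
  (∀ a b c d : X, (a, b, c, d) ∈ P → (c, d, a, b) ∈ P) ∧
  (∀ a b c d e f : X, (a, b, c, d) ∈ P → (c, d, e, f) ∈ P → (a, b, e, f) ∈ P) ∧
  (∀ a b c d : X, (a, b, c, d) ∈ P → (a, c, b, d) ∈ P) ∧
  (∀ a b c : X, ∃ d, (a, b, c, d) ∈ P)

/-- A strong parallelogram structure: the completing fourth point is unique. -/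
def IsStrongParallelogram (P : Set (Quad X)) : Prop :=
  IsWeakParallelogram P ∧ ∀ a b c : X, ∃! d, (a, b, c, d) ∈ P

/-- The entry of a quadruple at a vertex of the square. -/
def quadAt (p : Quad X) : Bool → Bool → X
  | false, false => p.1
  | false, true => p.2.1
  | true, false => p.2.2.1
  | true, true => p.2.2.2

/-- The cube whose face `ε₁ = 0` is `p` and whose face `ε₁ = 1` is `q`. -/
def joinQuad (p q : Quad X) : Cube X :=
  fun v => if v 0 = false then quadAt p (v 1) (v 2) else quadAt q (v 1) (v 2)

/-- The vertex of the cube with value `b` at coordinate `i` and values `u,v` at the two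
remaining coordinates, taken in increasing order. -/
def insert3 (i : Fin 3) (b u v : Bool) : Vtx :=
  if i = 0 then ![b, u, v] else if i = 1 then ![u, b, v] else ![u, v, b]

/-- The face `{v : v i = b}` of a cube, as a quadruple in lexicographic order. -/
def face (x : Cube X) (i : Fin 3) (b : Bool) : Quad X :=
  (x (insert3 i b false false), x (insert3 i b false true),
   x (insert3 i b true false), x (insert3 i b true true))

/-- The permutations of the vertices of the cube induced by Euclidean isometries of the unit
cube: a permutation of the three coordinates composed with flips of some coordinates. -/
def cubeSym (σ : Equiv.Perm (Fin 3)) (c : Vtx) (v : Vtx) : Vtx :=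
  fun j => xor (v (σ j)) (c j)

/-- A weak parallelepiped structure `(P, Q)`: every face of an element of `Q` lies in `P`;
`Q` is invariant under the Euclidean permutations of the cube; the relation `≈` on `P`
(`p ≈ q ↔ joinQuad p q ∈ Q`) is an equivalence relation; and seven points whose three
determined faces lie in `P` can be completed to an element of `Q`. -/
def IsWeakParallelepiped (P : Set (Quad X)) (Q : Set (Cube X)) : Prop :=
  IsWeakParallelogram P ∧
  (∀ x ∈ Q, ∀ (i : Fin 3) (b : Bool), face x i b ∈ P) ∧
  (∀ (σ : Equiv.Perm (Fin 3)) (c : Vtx), ∀ x ∈ Q, (fun v => x (cubeSym σ c v)) ∈ Q) ∧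
  (∀ p ∈ P, joinQuad p p ∈ Q) ∧
  (∀ p q : Quad X, joinQuad p q ∈ Q → joinQuad q p ∈ Q) ∧
  (∀ p q r : Quad X, joinQuad p q ∈ Q → joinQuad q r ∈ Q → joinQuad p r ∈ Q) ∧
  (∀ x000 x001 x010 x011 x100 x101 x110 : X,
    (x000, x001, x010, x011) ∈ P → (x000, x010, x100, x110) ∈ P →
    (x000, x001, x100, x101) ∈ P →
    ∃ x111, joinQuad (x000, x001, x010, x011) (x100, x101, x110, x111) ∈ Q)

/-- A strong parallelepiped structure: the completing eighth point is unique. -/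
def IsStrongParallelepiped (P : Set (Quad X)) (Q : Set (Cube X)) : Prop :=
  IsWeakParallelepiped P Q ∧
  ∀ x000 x001 x010 x011 x100 x101 x110 : X,
    (x000, x001, x010, x011) ∈ P → (x000, x010, x100, x110) ∈ P →
    (x000, x001, x100, x101) ∈ P →
    ∃! x111, joinQuad (x000, x001, x010, x011) (x100, x101, x110, x111) ∈ Q

/-- The setoid on `X²` given by the parallelogram relation `∼`. -/
def baseSetoid (P : Set (Quad X)) (hP : IsWeakParallelogram P) : Setoid (X × X) where
  r p q := (p.1, p.2, q.1, q.2) ∈ P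
  iseqv := ⟨fun p => hP.1 p.1 p.2,
            fun h => hP.2.1 _ _ _ _ h,
            fun h h' => hP.2.2.1 _ _ _ _ _ _ h h'⟩

/-- The base `B = X²/∼` of a weak parallelogram structure. -/
def Base (P : Set (Quad X)) (hP : IsWeakParallelogram P) : Type := Quotient (baseSetoid P hP)

/-- The class `⟨x,y⟩ ∈ B` of a pair `(x,y)`. -/
def cls (P : Set (Quad X)) (hP : IsWeakParallelogram P) (x y : X) : Base P hP :=
  Quotient.mk (baseSetoid P hP) (x, y)

/-- The Gowers-type sum over parallelograms attached to a finitely supported `f : X → ℂ`. -/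
noncomputable def gSum2 (P : Set (Quad X)) (f : X →₀ ℂ) : ℂ :=
  ∑ᶠ q ∈ P, f q.1 * (starRingEnd ℂ) (f q.2.1) * (starRingEnd ℂ) (f q.2.2.1) * f q.2.2.2

/-- The seminorm `‖f‖_P = (gSum2 P f)^{1/4}`. -/
noncomputable def pNorm (P : Set (Quad X)) (f : X →₀ ℂ) : ℝ :=
  (gSum2 P f).re ^ ((1 : ℝ) / 4)

/-- `C^{|ε|} z`: conjugate `z` when the vertex `v` has an odd number of `1` entries. -/
noncomputable def cConjFactor (v : Vtx) (z : ℂ) : ℂ :=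
  if xor (v 0) (xor (v 1) (v 2)) then (starRingEnd ℂ) z else z

/-- The Gowers-type sum over parallelepipeds attached to a finitely supported `f : X → ℂ`. -/
noncomputable def gSum3 (Q : Set (Cube X)) (f : X →₀ ℂ) : ℂ :=
  ∑ᶠ x ∈ Q, ∏ v : Vtx, cConjFactor v (f (x v))

/-- The seminorm `‖f‖_Q = (gSum3 Q f)^{1/8}`. -/
noncomputable def qNorm (Q : Set (Cube X)) (f : X →₀ ℂ) : ℝ :=
  (gSum3 Q f).re ^ ((1 : ℝ) / 8)

/-- The structure group of a parallelepiped structure, as a set of bijections of `X`: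
those `g` mapping every parallelogram to an equivalent parallelogram. -/
def structSet (P : Set (Quad X)) (Q : Set (Cube X)) : Set (Equiv.Perm X) :=
  {g | ∀ p ∈ P, map4 g p ∈ P ∧ joinQuad (map4 g p) p ∈ Q}

/-- `x` and `y` lie in the same fiber of `π : X → B`, `π(x) = ⟨i,x⟩`. -/
def sameFiber (P : Set (Quad X)) (i x y : X) : Prop := (i, x, i, y) ∈ P

/-- A vertical quadruple: all four points lie in one fiber. -/
def VerticalQ (P : Set (Quad X)) (i : X) (w : Quad X) : Prop :=
  sameFiber P i w.1 w.2.1 ∧ sameFiber P i w.2.1 w.2.2.1 ∧ sameFiber P i w.2.2.1 w.2.2.2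

/-- `y = u·x` where `u = [w]` is the class of the vertical parallelogram `w`:
`(x,x,x,y)` is a parallelogram equivalent to `w`. -/
def actsRel (P : Set (Quad X)) (Q : Set (Cube X)) (w : Quad X) (x y : X) : Prop :=
  (x, x, x, y) ∈ P ∧ joinQuad (x, x, x, y) w ∈ Q

section Groups

variable (G : Type) [Group G]

/-- The diagonal embedding `G → G^{[2]}`. -/
def diagHom2 : G →* Quad G where
  toFun g := (g, g, g, g)
  map_one' := rfl
  map_mul' _ _ := rfl

/-- The diagonal embedding `G → G^{[3]}`. -/
def diagHom3 : G →* Cube G where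
  toFun g := fun _ => g
  map_one' := rfl
  map_mul' _ _ := rfl

/-- The two dimensional edge group `G^{[2,1]}`. -/
def edgeGroup2 : Subgroup (Quad G) :=
  Subgroup.closure
    {q : Quad G | ∃ g : G, q = (g, g, 1, 1) ∨ q = (g, 1, g, 1) ∨ q = (g, g, g, g)}

/-- The second commutator subgroup `G₃ = [G, G₂]`. -/
def secondCommutator : Subgroup G := ⁅(⊤ : Subgroup G), commutator G⁆

variable {G}

/-- The edge group `F^{[2,1]}` of a subgroup `F ≤ G`, inside `G^{[2]}`. -/
def edgeGroup2Of (F : Subgroup G) : Subgroup (Quad G) :=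
  Subgroup.closure
    {q : Quad G | ∃ u ∈ F, q = (u, u, 1, 1) ∨ q = (u, 1, u, 1) ∨ q = (u, u, u, u)}

/-- `F^{[2]} = F⁴` as a subgroup of `G^{[2]}`. -/
def quadSub (F : Subgroup G) : Subgroup (Quad G) := F.prod (F.prod (F.prod F))

/-- Faces of the cube `{0,1}³`. -/
def IsFace3 (α : Set Vtx) : Prop := ∃ (i : Fin 3) (b : Bool), α = {v : Vtx | v i = b}

/-- Edges of the cube `{0,1}³`. -/
def IsEdge3 (α : Set Vtx) : Prop :=
  ∃ (i j : Fin 3) (b c : Bool), i ≠ j ∧ α = {v : Vtx | v i = b ∧ v j = c}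

open Classical in
/-- The element `g^{[3,α]}` of `G^{[3]}`, with coordinate `g` on `α` and `1` elsewhere. -/
noncomputable def cubeElt (α : Set Vtx) (g : G) : Cube G :=
  fun v => if v ∈ α then g else 1

variable (G)

/-- The face group `G^{[3,2]}`, generated by the `g^{[3,f]}` for faces `f` of the cube. -/
noncomputable def faceGroup : Subgroup (Cube G) :=
  Subgroup.closure {x : Cube G | ∃ (g : G) (α : Set Vtx), IsFace3 α ∧ x = cubeElt α g}

variable {G}

/-- The edge group `F^{[3,1]}` of a subgroup `F ≤ G`, generated by the `u^{[3,e]}` for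
`u ∈ F` and edges `e` of the cube. -/
noncomputable def edgeGroup3 (F : Subgroup G) : Subgroup (Cube G) :=
  Subgroup.closure {x : Cube G | ∃ u ∈ F, ∃ α : Set Vtx, IsEdge3 α ∧ x = cubeElt α u}

end Groups

/-- The data realizing `(PY, QY)` as the nilparallelepiped structure associated to
`G`, `F`, `Γ` via the coset projection `p : G → Y ≅ G/Γ`. -/
def NilWitness (G : Type) [Group G] (F Γ : Subgroup G) {Y : Type} (p : G → Y)
    (PY : Set (Quad Y)) (QY : Set (Cube Y)) : Prop :=
  commutator G ≤ F ∧ F ≤ Subgroup.center G ∧ Γ ⊓ F = ⊥ ∧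
  Function.Surjective p ∧ (∀ g g' : G, p g = p g' ↔ g⁻¹ * g' ∈ Γ) ∧
  PY = map4 p '' ((edgeGroup2 G : Set (Quad G)) * (quadSub F : Set (Quad G))) ∧
  QY = mapCube p '' ((faceGroup G : Set (Cube G)) * (edgeGroup3 F : Set (Cube G)))

/-- `(PY, QY)` is a nilparallelepiped structure. -/
def IsNilStructure {Y : Type} (PY : Set (Quad Y)) (QY : Set (Cube Y)) : Prop :=
  ∃ (G : Type) (inst : Group G) (F Γ : @Subgroup G inst) (p : G → Y),
    @NilWitness G inst F Γ Y p PY QY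

/-- A splitting of the exact sequence `0 → F → P_s → B → 0` for `s = ⟨a₀, b₀⟩`, encoded
by a lift `ψ : X → 𝒫_s` of a homomorphism section `φ : B → P_s` of `q_s`:
`ψ x` is a parallelogram in `𝒫_s` representing the class `φ(π(x))`. -/
def IsSplittingAt (P : Set (Quad X)) (Q : Set (Cube X)) (i a₀ b₀ : X) : Prop :=
  ∃ ψ : X → Quad X,
    (∀ x, ψ x ∈ P) ∧
    (∀ x, (a₀, b₀, (ψ x).1, (ψ x).2.1) ∈ P) ∧
    (∀ x, ((ψ x).1, (ψ x).2.2.1, i, x) ∈ P) ∧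
    (∀ x y, (i, x, i, y) ∈ P → joinQuad (ψ x) (ψ y) ∈ Q) ∧
    (∀ x1 x2 x3, (x1, x3, i, x2) ∈ P →
      ∃ c d, joinQuad ((ψ x1).2.2.1, (ψ x1).2.2.2, c, d) (ψ x2) ∈ Q ∧
        joinQuad ((ψ x1).1, (ψ x1).2.1, c, d) (ψ x3) ∈ Q)

/-- `(B, c)` is a realization of the base group of the parallelogram structure `P`,
`c x y` realizing the class `⟨x,y⟩`. -/
def IsBaseRealization (P : Set (Quad X)) (B : Type) [AddCommGroup B] (c : X → X → B) : Prop :=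
  (Function.Surjective fun p : X × X => c p.1 p.2) ∧
  (∀ a b a' b' : X, c a b = c a' b' ↔ (a, b, a', b') ∈ P) ∧
  (∀ a b d : X, c a b + c b d = c a d)

/-- `(F, fl)` is a realization of the fiber group of the parallelepiped structure `(P, Q)`:
`fl` maps vertical parallelograms onto `F`, separates exactly the `≈`-classes, and is
additive with respect to the composition of vertical parallelograms. -/
def IsFiberRealization (P : Set (Quad X)) (Q : Set (Cube X)) (i : X) (F : Type)
    [AddCommGroup F] (fl : Quad X → F) : Prop :=
  (∀ u : F, ∃ w, VerticalQ P i w ∧ fl w = u) ∧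
  (∀ w w' : Quad X, VerticalQ P i w → VerticalQ P i w' →
    (fl w = fl w' ↔ joinQuad w w' ∈ Q)) ∧
  (∀ x0 x1 x2 x3 x4 x5 : X, sameFiber P i x0 x1 → sameFiber P i x1 x2 →
    sameFiber P i x2 x3 → sameFiber P i x3 x4 → sameFiber P i x4 x5 →
    fl (x0, x1, x2, x3) + fl (x2, x3, x4, x5) = fl (x0, x1, x4, x5))

/-- A divisible (equivalently, injective) abelian group. -/
def IsDivisibleGroup (F : Type) [AddCommGroup F] : Prop :=
  ∀ (u : F) (n : ℕ), 0 < n → ∃ v : F, n • v = u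

/-- A projective abelian group (projective as a `ℤ`-module). -/
def IsProjectiveAdd (B : Type) [AddCommGroup B] : Prop := Module.Projective ℤ B



section Infra

variable {G : Type} [Group G] {F : Subgroup G}

/-- commutator gadget -/
def gam (u v : G) : G := u⁻¹ * v⁻¹ * u * v

lemma gam_swap (u v : G) : u * v = v * u * gam u v := by unfold gam; group

lemma head_swap (u v rest : G) : u * (v * rest) = v * (u * (gam u v * rest)) := by
  unfold gam; group

lemma gam_one_left (v : G) : gam 1 v = 1 := by unfold gam; group

lemma gam_anti (u v : G) : gam u v * gam v u = 1 := by unfold gam; group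

lemma gam_anti' (u v : G) : gam u v = (gam v u)⁻¹ :=
  eq_inv_of_mul_eq_one_left (gam_anti u v)

section
variable (h1 : commutator G ≤ F) (h2 : F ≤ Subgroup.center G)

include h2 in
lemma Fcomm {f : G} (hf : f ∈ F) (g : G) : f * g = g * f :=
  ((Subgroup.mem_center_iff.mp (h2 hf)) g).symm

include h1 in
lemma gam_mem (u v : G) : gam u v ∈ F := by
  have h := h1 (Subgroup.commutator_mem_commutator (Subgroup.mem_top u⁻¹) (Subgroup.mem_top v⁻¹))
  simpa [commutatorElement_def, gam] using h

include h2 in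
lemma cen_head_swap {c : G} (hc : c ∈ F) (u rest : G) : c * (u * rest) = u * (c * rest) := by
  rw [← mul_assoc, Fcomm h2 hc u, mul_assoc]

include h2 in
lemma cen_swap {c : G} (hc : c ∈ F) (u : G) : c * u = u * c := Fcomm h2 hc u

include h1 h2 in
lemma gam_mul_left (u w v : G) : gam (u * w) v = gam u v * gam w v := by
  have step1 : gam (u*w) v = w⁻¹ * (gam u v * (v⁻¹ * (w * v))) := by unfold gam; group
  rw [step1, ← cen_head_swap h2 (gam_mem h1 u v) w⁻¹]; unfold gam; group

include h1 h2 in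
lemma gam_inv_left (u v : G) : gam u⁻¹ v = (gam u v)⁻¹ := by
  have h : gam u v * gam u⁻¹ v = 1 := by
    rw [← gam_mul_left h1 h2, mul_inv_cancel, gam_one_left]
  exact (inv_eq_of_mul_eq_one_right h).symm

include h1 h2 in
lemma gam_mul_right (u v w : G) : gam u (v * w) = gam u v * gam u w := by
  calc gam u (v*w) = (gam (v*w) u)⁻¹ := gam_anti' _ _
    _ = (gam v u * gam w u)⁻¹ := by rw [gam_mul_left h1 h2]
    _ = (gam w u)⁻¹ * (gam v u)⁻¹ := mul_inv_rev _ _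
    _ = gam u w * gam u v := by rw [← gam_anti', ← gam_anti']
    _ = gam u v * gam u w := cen_swap h2 (gam_mem h1 _ _) _

include h1 h2 in
lemma gam_inv_right (u v : G) : gam u v⁻¹ = (gam u v)⁻¹ := by
  calc gam u v⁻¹ = (gam v⁻¹ u)⁻¹ := gam_anti' _ _
    _ = ((gam v u)⁻¹)⁻¹ := by rw [gam_inv_left h1 h2]
    _ = gam v u := inv_inv _
    _ = (gam u v)⁻¹ := gam_anti' _ _

include h2 in
lemma gam_F_left {f : G} (hf : f ∈ F) (v : G) : gam f v = 1 := by
  have step : gam f v = f⁻¹ * (v⁻¹ * (f * v)) := by unfold gam; group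
  rw [step, ← cen_head_swap h2 hf v⁻¹]; group

include h2 in
lemma gam_F_right {f : G} (hf : f ∈ F) (u : G) : gam u f = 1 := by
  have step : gam u f = u⁻¹ * (f⁻¹ * (u * f)) := by unfold gam; group
  rw [step, cen_head_swap h2 (F.inv_mem hf) u]; group

include h1 h2 in
lemma gam_modF_left {f : G} (hf : f ∈ F) (u v : G) : gam (u * f) v = gam u v := by
  rw [gam_mul_left h1 h2, gam_F_left h2 hf, mul_one]

include h1 h2 in
lemma gam_modF_right {f : G} (hf : f ∈ F) (u v : G) : gam u (v * f) = gam u v := by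
  rw [gam_mul_right h1 h2, gam_F_right h2 hf, mul_one]

end

/-! ### abelianized membership machinery -/

def abm (g : G) : Additive (Abelianization G) := Additive.ofMul (Abelianization.of g)

def Fab (F : Subgroup G) : AddSubgroup (Additive (Abelianization G)) :=
  Subgroup.toAddSubgroup (F.map Abelianization.of)

lemma abm_mul (g h : G) : abm (g * h) = abm g + abm h := by
  simp [abm, map_mul]

lemma abm_inv (g : G) : abm g⁻¹ = - abm g := by
  simp [abm, map_inv]

lemma abm_one : abm (1 : G) = 0 := by simp [abm]

lemma mem_Fab_iff (a : Additive (Abelianization G)) :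
    a ∈ Fab F ↔ Additive.toMul a ∈ F.map Abelianization.of := Iff.rfl

lemma abm_mem_Fab {f : G} (hf : f ∈ F) : abm f ∈ Fab F := by
  rw [mem_Fab_iff]
  exact ⟨f, hf, rfl⟩

lemma mem_F_iff (h1 : commutator G ≤ F) (g : G) : g ∈ F ↔ abm g ∈ Fab F := by
  constructor
  · exact abm_mem_Fab
  · intro h
    obtain ⟨f, hf, hfg⟩ := (mem_Fab_iff _).mp h
    have : Abelianization.of (f⁻¹ * g) = 1 := by
      rw [map_mul, map_inv]
      have : Abelianization.of f = Abelianization.of g := hfg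
      rw [this]; group
    have hk : f⁻¹ * g ∈ commutator G := (QuotientGroup.eq_one_iff _).mp this
    have : f * (f⁻¹ * g) ∈ F := F.mul_mem hf (h1 hk)
    simpa using this

end Infra

/-! ### Vertices of the cube -/

def w000 : Vtx := ![false, false, false]
def w001 : Vtx := ![false, false, true]
def w010 : Vtx := ![false, true, false]
def w011 : Vtx := ![false, true, true]
def w100 : Vtx := ![true, false, false]
def w101 : Vtx := ![true, false, true]
def w110 : Vtx := ![true, true, false]
def w111 : Vtx := ![true, true, true]

lemma vtx_eq (v : Vtx) : v = ![v 0, v 1, v 2] := by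
  funext j; fin_cases j <;> simp

lemma vtx_cases (v : Vtx) :
    v = w000 ∨ v = w001 ∨ v = w010 ∨ v = w011 ∨
    v = w100 ∨ v = w101 ∨ v = w110 ∨ v = w111 := by
  have h := vtx_eq v
  rcases Bool.eq_false_or_eq_true (v 0) with h0 | h0 <;>
    rcases Bool.eq_false_or_eq_true (v 1) with h1 | h1 <;>
      rcases Bool.eq_false_or_eq_true (v 2) with h2 | h2 <;>
        rw [h0, h1, h2] at h <;>
          simp [w000, w001, w010, w011, w100, w101, w110, w111, h]

section NilProof

variable {G : Type} [Group G] {F Γ : Subgroup G}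

/-- parallelogram defect -/
def d2 (t : Quad G) : G := t.2.1⁻¹ * t.1 * t.2.2.1⁻¹ * t.2.2.2

/-- cube defects -/
def dL (x : Cube G) : G := (x w011)⁻¹ * x w001 * (x w101)⁻¹ * x w111
def dR (x : Cube G) : G := (x w010)⁻¹ * x w000 * (x w100)⁻¹ * x w110
def d13 (x : Cube G) : G := (x w001)⁻¹ * x w000 * (x w100)⁻¹ * x w101
def d23 (x : Cube G) : G := (x w001)⁻¹ * x w000 * (x w010)⁻¹ * x w011

section K2

variable (h1 : commutator G ≤ F)

/-- The explicit description of `G^{[2,1]} F^{[2]}` -/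
def K2' (h1 : commutator G ≤ F) : Subgroup (Quad G) where
  carrier := {t | d2 t ∈ F}
  one_mem' := by simpa [d2] using F.one_mem
  mul_mem' := by
    intro s t hs ht
    rw [Set.mem_setOf_eq, mem_F_iff h1] at hs ht ⊢
    have e : abm (d2 (s * t)) = abm (d2 s) + abm (d2 t) := by
      simp only [d2, Prod.fst_mul, Prod.snd_mul, abm_mul, abm_inv]
      abel
    rw [e]; exact add_mem hs ht
  inv_mem' := by
    intro t ht
    rw [Set.mem_setOf_eq, mem_F_iff h1] at ht ⊢
    have e : abm (d2 t⁻¹) = - abm (d2 t) := by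
      simp only [d2, Prod.fst_inv, Prod.snd_inv, abm_mul, abm_inv]
      abel
    rw [e]; exact neg_mem ht

lemma mem_quadSub_iff (t : Quad G) :
    t ∈ quadSub F ↔ t.1 ∈ F ∧ t.2.1 ∈ F ∧ t.2.2.1 ∈ F ∧ t.2.2.2 ∈ F := by
  simp [quadSub, Subgroup.mem_prod]

lemma edge2_mem_a (g : G) : (g, g, 1, 1) ∈ edgeGroup2 G :=
  Subgroup.subset_closure ⟨g, Or.inl rfl⟩

lemma edge2_mem_b (g : G) : (g, 1, g, 1) ∈ edgeGroup2 G :=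
  Subgroup.subset_closure ⟨g, Or.inr (Or.inl rfl)⟩

lemma edge2_mem_diag (g : G) : (g, g, g, g) ∈ edgeGroup2 G :=
  Subgroup.subset_closure ⟨g, Or.inr (Or.inr rfl)⟩

lemma edge2_mem_c (g : G) : ((1 : G), g, 1, g) ∈ edgeGroup2 G := by
  have h := (edgeGroup2 G).mul_mem (edge2_mem_diag g) ((edgeGroup2 G).inv_mem (edge2_mem_b g))
  have e : (g, g, g, g) * (g, (1:G), g, 1)⁻¹ = ((1:G), g, 1, g) := by
    simp [Prod.ext_iff]
  rwa [e] at h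

lemma edge2_mem_d (g : G) : ((1 : G), 1, g, g) ∈ edgeGroup2 G := by
  have h := (edgeGroup2 G).mul_mem (edge2_mem_diag g) ((edgeGroup2 G).inv_mem (edge2_mem_a g))
  have e : (g, g, g, g) * (g, g, (1:G), 1)⁻¹ = ((1:G), 1, g, g) := by
    simp [Prod.ext_iff]
  rwa [e] at h

lemma mem_KK2_iff (h1 : commutator G ≤ F) (t : Quad G) :
    t ∈ edgeGroup2 G ⊔ quadSub F ↔ d2 t ∈ F := by
  constructor
  · intro ht
    have hle : edgeGroup2 G ⊔ quadSub F ≤ K2' h1 := by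
      apply sup_le
      · rw [edgeGroup2, Subgroup.closure_le]
        rintro q ⟨g, rfl | rfl | rfl⟩ <;>
          · show d2 _ ∈ F
            simpa [d2] using F.one_mem
      · intro q hq
        rw [mem_quadSub_iff] at hq
        obtain ⟨ha, hb, hc, hd⟩ := hq
        show d2 q ∈ F
        exact F.mul_mem (F.mul_mem (F.mul_mem (F.inv_mem hb) ha) (F.inv_mem hc)) hd
    exact hle ht
  · intro ht
    obtain ⟨a, b, c, d⟩ := t
    simp only [d2] at ht
    have hw : (a⁻¹ * c)⁻¹ * ((a⁻¹ * b)⁻¹ * (a⁻¹ * d)) ∈ F := by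
      rw [mem_F_iff h1] at ht ⊢
      have e : abm ((a⁻¹ * c)⁻¹ * ((a⁻¹ * b)⁻¹ * (a⁻¹ * d))) = abm (b⁻¹ * a * c⁻¹ * d) := by
        simp only [abm_mul, abm_inv]; abel
      rw [e]; exact ht
    have key : (a, b, c, d) =
        (a, a, a, a) * ((1 : G), a⁻¹ * b, 1, a⁻¹ * b) * ((1 : G), 1, a⁻¹ * c, a⁻¹ * c) *
          ((1 : G), 1, 1, (a⁻¹ * c)⁻¹ * ((a⁻¹ * b)⁻¹ * (a⁻¹ * d))) := by
      simp only [Prod.ext_iff, Prod.fst_mul, Prod.snd_mul]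
      refine ⟨by group, by group, by group, by group⟩
    rw [key]
    refine Subgroup.mul_mem _ (Subgroup.mul_mem _ (Subgroup.mul_mem _ ?_ ?_) ?_) ?_
    · exact Subgroup.mem_sup_left (edge2_mem_diag a)
    · exact Subgroup.mem_sup_left (edge2_mem_c (a⁻¹ * b))
    · exact Subgroup.mem_sup_left (edge2_mem_d (a⁻¹ * c))
    · refine Subgroup.mem_sup_right ?_
      rw [mem_quadSub_iff]
      exact ⟨F.one_mem, F.one_mem, F.one_mem, hw⟩

end K2

end NilProof

section K3defs

variable {G : Type} [Group G] {F : Subgroup G}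
variable (h1 : commutator G ≤ F) (h2 : F ≤ Subgroup.center G)

include h2 in
lemma cen_conj {f : G} (hf : f ∈ F) (w : G) : w * f * w⁻¹ = f := by
  rw [← Fcomm h2 hf w]; group

include h1 h2 in
lemma gam_congr_left {u u' : G} (h : u⁻¹ * u' ∈ F) (v : G) : gam u' v = gam u v := by
  have e : u' = u * (u⁻¹ * u') := by group
  rw [e, gam_mul_left h1 h2, gam_F_left h2 h, mul_one]

include h1 h2 in
lemma gam_congr_right {v v' : G} (h : v⁻¹ * v' ∈ F) (u : G) : gam u v' = gam u v := by
  have e : v' = v * (v⁻¹ * v') := by group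
  rw [e, gam_mul_right h1 h2, gam_F_right h2 h, mul_one]

include h1 h2 in
lemma master (p q b1 b2 b3 b4 : G) :
    b1 * (p * (b2 * (b3 * (q * b4)))) =
    p * (q * (b1 * (gam b1 q * (gam b1 p * (b2 * (gam b2 q * (b3 * (gam b3 q * b4)))))))) := by
  rw [head_swap b1 p, head_swap b3 q, head_swap b2 q,
    cen_head_swap h2 (gam_mem h1 b1 p) q, head_swap b1 q]

include h1 h2 in
lemma master2 (p q b1 b2 b3 b4 : G) :
    b1 * (p * (b2 * (b3 * (q * b4)))) =
    (p * q) * ((b1 * (b2 * (b3 * b4))) *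
      (gam b1 q * (gam b1 p * (gam b2 q * gam b3 q)))) := by
  rw [master h1 h2 p q b1 b2 b3 b4]
  rw [cen_swap h2 (gam_mem h1 b3 q) b4]
  rw [cen_head_swap h2 (gam_mem h1 b2 q) b3]
  rw [cen_head_swap h2 (gam_mem h1 b2 q) b4]
  rw [cen_head_swap h2 (gam_mem h1 b1 p) b2]
  rw [cen_head_swap h2 (gam_mem h1 b1 p) b3]
  rw [cen_head_swap h2 (gam_mem h1 b1 p) b4]
  rw [cen_head_swap h2 (gam_mem h1 b1 q) b2]
  rw [cen_head_swap h2 (gam_mem h1 b1 q) b3]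
  rw [cen_head_swap h2 (gam_mem h1 b1 q) b4]
  group

include h2 in
lemma shuffle3 {f g' : G} (hf : f ∈ F) (hg : g' ∈ F) (a b c r : G) :
    a * f * (b * (c * (g' * r))) = a * b * c * r * f * g' := by
  calc a * f * (b * (c * (g' * r)))
      = a * (f * (b * (c * (g' * r)))) := by group
    _ = a * (b * (f * (c * (g' * r)))) := by rw [cen_head_swap h2 hf b]
    _ = a * (b * (c * (f * (g' * r)))) := by rw [cen_head_swap h2 hf c]
    _ = a * (b * (c * (g' * (f * r)))) := by rw [cen_head_swap h2 hf g']
    _ = a * (b * (c * (g' * (r * f)))) := by rw [cen_swap h2 hf r]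
    _ = a * (b * (c * (r * (g' * f)))) := by rw [cen_head_swap h2 hg r]
    _ = a * (b * (c * (r * (f * g')))) := by rw [cen_swap h2 hg f]
    _ = a * b * c * r * f * g' := by group

/-- central-valued commutator gadget -/
def zgam (u v : G) : Subgroup.center G := ⟨gam u v, h2 (gam_mem h1 u v)⟩

@[simp] lemma zgam_coe (u v : G) : ((zgam h1 h2 u v : Subgroup.center G) : G) = gam u v := rfl

lemma zgam_mul_left (u w v : G) :
    zgam h1 h2 (u * w) v = zgam h1 h2 u v * zgam h1 h2 w v :=
  Subtype.ext (gam_mul_left h1 h2 u w v)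

lemma zgam_inv_left (u v : G) : zgam h1 h2 u⁻¹ v = (zgam h1 h2 u v)⁻¹ :=
  Subtype.ext (gam_inv_left h1 h2 u v)

lemma zgam_mul_right (u v w : G) :
    zgam h1 h2 u (v * w) = zgam h1 h2 u v * zgam h1 h2 u w :=
  Subtype.ext (gam_mul_right h1 h2 u v w)

lemma zgam_inv_right (u v : G) : zgam h1 h2 u v⁻¹ = (zgam h1 h2 u v)⁻¹ :=
  Subtype.ext (gam_inv_right h1 h2 u v)

lemma zgam_congr_left {u u' : G} (h : u⁻¹ * u' ∈ F) (v : G) :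
    zgam h1 h2 u' v = zgam h1 h2 u v :=
  Subtype.ext (gam_congr_left h1 h2 h v)

lemma zgam_congr_right {v v' : G} (h : v⁻¹ * v' ∈ F) (u : G) :
    zgam h1 h2 u v' = zgam h1 h2 u v :=
  Subtype.ext (gam_congr_right h1 h2 h u)

lemma zgam_F_left {f : G} (hf : f ∈ F) (v : G) : zgam h1 h2 f v = 1 :=
  Subtype.ext (gam_F_left h2 hf v)

lemma zgam_F_right {f : G} (hf : f ∈ F) (u : G) : zgam h1 h2 u f = 1 :=
  Subtype.ext (gam_F_right h2 hf u)

/-! helpers for `∈ F` via abelianization -/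

include h1 in
lemma mem_F_comb1 {w a : G} (ha : a ∈ F) (h : abm w = abm a) : w ∈ F := by
  rw [mem_F_iff h1] at *; rwa [h]

include h1 in
lemma mem_F_comb1' {w a : G} (ha : a ∈ F) (h : abm w = - abm a) : w ∈ F := by
  rw [mem_F_iff h1] at *; rw [h]; exact neg_mem ha

include h1 in
lemma mem_F_comb2 {w a b : G} (ha : a ∈ F) (hb : b ∈ F)
    (h : abm w = abm a + abm b) : w ∈ F := by
  rw [mem_F_iff h1] at *; rw [h]; exact add_mem ha hb

include h1 in
lemma mem_F_comb3 {w a b c : G} (ha : a ∈ F) (hb : b ∈ F) (hc : c ∈ F)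
    (h : abm w = abm a + abm b - abm c) : w ∈ F := by
  rw [mem_F_iff h1] at *; rw [h]; exact sub_mem (add_mem ha hb) hc

end K3defs

section K3sub

variable {G : Type} [Group G] {F : Subgroup G}
variable (h1 : commutator G ≤ F) (h2 : F ≤ Subgroup.center G)

/-- The explicit description of `G^{[3,2]} F^{[3,1]}`. -/
def K3' : Subgroup (Cube G) where
  carrier := {x | dR x ∈ F ∧ d13 x ∈ F ∧ d23 x ∈ F ∧ dL x = dR x}
  one_mem' := by
    refine ⟨?_, ?_, ?_, rfl⟩ <;> simpa [dR, d13, d23] using F.one_mem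
  mul_mem' := by
    intro x y hx hy
    obtain ⟨hxR, hx13, hx23, hxE⟩ := hx
    obtain ⟨hyR, hy13, hy23, hyE⟩ := hy
    have hxL : dL x ∈ F := by rw [hxE]; exact hxR
    have hyL : dL y ∈ F := by rw [hyE]; exact hyR
    refine ⟨?_, ?_, ?_, ?_⟩
    · exact mem_F_comb2 h1 hxR hyR
        (by simp only [dR, Pi.mul_apply, abm_mul, abm_inv]; abel)
    · exact mem_F_comb2 h1 hx13 hy13
        (by simp only [d13, Pi.mul_apply, abm_mul, abm_inv]; abel)
    · exact mem_F_comb2 h1 hx23 hy23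
        (by simp only [d23, Pi.mul_apply, abm_mul, abm_inv]; abel)
    · -- the exact top equation
      show dL (x * y) = dR (x * y)
      have hPp : ((x w010)⁻¹ * x w000)⁻¹ * ((x w011)⁻¹ * x w001) ∈ F :=
        mem_F_comb1' h1 hx23 (by simp only [d23, abm_mul, abm_inv]; abel)
      have hQq : ((x w100)⁻¹ * x w110)⁻¹ * ((x w101)⁻¹ * x w111) ∈ F := by
        refine mem_F_comb3 h1 hxL hx23 hxR ?_
        simp only [dL, dR, d23, abm_mul, abm_inv]
        abel
      have hPQ : ((x w010)⁻¹ * x w000) * ((x w100)⁻¹ * x w110) ∈ F := by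
        have e : ((x w010)⁻¹ * x w000) * ((x w100)⁻¹ * x w110) = dR x := by
          simp only [dR]; group
        rw [e]; exact hxR
      have hQP : ((x w100)⁻¹ * x w110) * ((x w010)⁻¹ * x w000) ∈ F :=
        mem_F_comb1 h1 hPQ (by simp only [abm_mul, abm_inv]; abel)
      have h011 : (y w010 * (y w001 * (y w000)⁻¹))⁻¹ * y w011 ∈ F :=
        mem_F_comb1 h1 hy23 (by simp only [d23, abm_mul, abm_inv]; abel)
      have h101 : (y w100 * (y w001 * (y w000)⁻¹))⁻¹ * y w101 ∈ F :=
        mem_F_comb1 h1 hy13 (by simp only [d13, abm_mul, abm_inv]; abel)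
      have eL : dL (x * y) = (y w011)⁻¹ * (((x w011)⁻¹ * x w001) *
          (y w001 * ((y w101)⁻¹ * (((x w101)⁻¹ * x w111) * y w111)))) := by
        simp only [dL, Pi.mul_apply]; group
      have eR : dR (x * y) = (y w010)⁻¹ * (((x w010)⁻¹ * x w000) *
          (y w000 * ((y w100)⁻¹ * (((x w100)⁻¹ * x w110) * y w110)))) := by
        simp only [dR, Pi.mul_apply]; group
      conv_lhs => rw [eL, master2 h1 h2]
      conv_rhs => rw [eR, master2 h1 h2]
      have hpq : ((x w011)⁻¹ * x w001) * ((x w101)⁻¹ * x w111) =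
          ((x w010)⁻¹ * x w000) * ((x w100)⁻¹ * x w110) := by
        have h := hxE
        simp only [dL, dR] at h
        rw [← mul_assoc, ← mul_assoc]; exact h
      have hBC : (y w011)⁻¹ * ((y w001) * ((y w101)⁻¹ * (y w111))) =
          (y w010)⁻¹ * ((y w000) * ((y w100)⁻¹ * (y w110))) := by
        have h := hyE
        simp only [dL, dR] at h
        simp only [← mul_assoc]; exact h
      rw [hpq, hBC]
      rw [mul_right_inj, mul_right_inj]
      -- central part
      have key : zgam h1 h2 (y w011)⁻¹ ((x w101)⁻¹ * x w111) *
          (zgam h1 h2 (y w011)⁻¹ ((x w011)⁻¹ * x w001) *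
            (zgam h1 h2 (y w001) ((x w101)⁻¹ * x w111) *
              zgam h1 h2 (y w101)⁻¹ ((x w101)⁻¹ * x w111))) =
          zgam h1 h2 (y w010)⁻¹ ((x w100)⁻¹ * x w110) *
          (zgam h1 h2 (y w010)⁻¹ ((x w010)⁻¹ * x w000) *
            (zgam h1 h2 (y w000) ((x w100)⁻¹ * x w110) *
              zgam h1 h2 (y w100)⁻¹ ((x w100)⁻¹ * x w110))) := by
        simp only [zgam_congr_right h1 h2 hQq, zgam_congr_right h1 h2 hPp]
        simp only [zgam_inv_left]
        simp only [zgam_congr_left h1 h2 h011, zgam_congr_left h1 h2 h101]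
        have e000 : zgam h1 h2 (y w000) ((x w100)⁻¹ * x w110) =
            (zgam h1 h2 (y w000) ((x w010)⁻¹ * x w000))⁻¹ := by
          refine eq_inv_of_mul_eq_one_left ?_
          rw [← zgam_mul_right h1 h2]
          exact zgam_F_right h1 h2 hQP _
        have e001 : zgam h1 h2 (y w001) ((x w100)⁻¹ * x w110) =
            (zgam h1 h2 (y w001) ((x w010)⁻¹ * x w000))⁻¹ := by
          refine eq_inv_of_mul_eq_one_left ?_
          rw [← zgam_mul_right h1 h2]
          exact zgam_F_right h1 h2 hQP _
        simp only [zgam_mul_left h1 h2, zgam_inv_left h1 h2, e000, e001, inv_inv]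
        refine Additive.ofMul.injective ?_
        simp only [ofMul_mul, ofMul_inv]
        open IsMulCommutative in abel
      simpa using congrArg Subtype.val key
  inv_mem' := by
    intro x hx
    obtain ⟨hxR, hx13, hx23, hxE⟩ := hx
    have hxL : dL x ∈ F := by rw [hxE]; exact hxR
    refine ⟨?_, ?_, ?_, ?_⟩
    · exact mem_F_comb1' h1 hxR
        (by simp only [dR, Pi.inv_apply, abm_mul, abm_inv]; abel)
    · exact mem_F_comb1' h1 hx13
        (by simp only [d13, Pi.inv_apply, abm_mul, abm_inv]; abel)
    · exact mem_F_comb1' h1 hx23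
        (by simp only [d23, Pi.inv_apply, abm_mul, abm_inv]; abel)
    · show dL x⁻¹ = dR x⁻¹
      have hPp : ((x w010)⁻¹ * x w000)⁻¹ * ((x w011)⁻¹ * x w001) ∈ F :=
        mem_F_comb1' h1 hx23 (by simp only [d23, abm_mul, abm_inv]; abel)
      have hQq : ((x w100)⁻¹ * x w110)⁻¹ * ((x w101)⁻¹ * x w111) ∈ F := by
        refine mem_F_comb3 h1 hxL hx23 hxR ?_
        simp only [dL, dR, d23, abm_mul, abm_inv]
        abel
      have hPQ : ((x w010)⁻¹ * x w000) * ((x w100)⁻¹ * x w110) ∈ F := by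
        have e : ((x w010)⁻¹ * x w000) * ((x w100)⁻¹ * x w110) = dR x := by
          simp only [dR]; group
        rw [e]; exact hxR
      have hQP : ((x w100)⁻¹ * x w110) * ((x w010)⁻¹ * x w000) ∈ F :=
        mem_F_comb1 h1 hPQ (by simp only [abm_mul, abm_inv]; abel)
      have h011 : (x w010 * (x w001 * (x w000)⁻¹))⁻¹ * x w011 ∈ F :=
        mem_F_comb1 h1 hx23 (by simp only [d23, abm_mul, abm_inv]; abel)
      have h101 : (x w100 * (x w001 * (x w000)⁻¹))⁻¹ * x w101 ∈ F :=
        mem_F_comb1 h1 hx13 (by simp only [d13, abm_mul, abm_inv]; abel)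
      have hpq : ((x w011)⁻¹ * x w001) * ((x w101)⁻¹ * x w111) =
          ((x w010)⁻¹ * x w000) * ((x w100)⁻¹ * x w110) := by
        have h := hxE
        simp only [dL, dR] at h
        rw [← mul_assoc, ← mul_assoc]; exact h
      have eL : dL x⁻¹ = ((x w011)⁻¹ * x w001)⁻¹ *
          (gam ((x w011)⁻¹ * x w001)⁻¹ (x w011)⁻¹ *
            (((x w101)⁻¹ * x w111)⁻¹ * gam ((x w101)⁻¹ * x w111)⁻¹ (x w101)⁻¹)) := by
        simp only [dL, Pi.inv_apply, gam]; group
      have eR : dR x⁻¹ = ((x w010)⁻¹ * x w000)⁻¹ *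
          (gam ((x w010)⁻¹ * x w000)⁻¹ (x w010)⁻¹ *
            (((x w100)⁻¹ * x w110)⁻¹ * gam ((x w100)⁻¹ * x w110)⁻¹ (x w100)⁻¹)) := by
        simp only [dR, Pi.inv_apply, gam]; group
      have invshuffle : ∀ p q t : G, p⁻¹ * (q⁻¹ * t) = (gam q p)⁻¹ * ((p * q)⁻¹ * t) := by
        intro p q t; unfold gam; group
      conv_lhs =>
        rw [eL, cen_head_swap h2 (gam_mem h1 (((x w011)⁻¹ * x w001))⁻¹ ((x w011))⁻¹)
          (((x w101)⁻¹ * x w111))⁻¹,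
          invshuffle ((x w011)⁻¹ * x w001) ((x w101)⁻¹ * x w111) _, hpq,
          cen_head_swap h2 (F.inv_mem (gam_mem h1 ((x w101)⁻¹ * x w111) ((x w011)⁻¹ * x w001)))
            (((x w010)⁻¹ * x w000) * ((x w100)⁻¹ * x w110))⁻¹]
      conv_rhs =>
        rw [eR, cen_head_swap h2 (gam_mem h1 (((x w010)⁻¹ * x w000))⁻¹ ((x w010))⁻¹)
          (((x w100)⁻¹ * x w110))⁻¹,
          invshuffle ((x w010)⁻¹ * x w000) ((x w100)⁻¹ * x w110) _,
          cen_head_swap h2 (F.inv_mem (gam_mem h1 ((x w100)⁻¹ * x w110) ((x w010)⁻¹ * x w000)))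
            (((x w010)⁻¹ * x w000) * ((x w100)⁻¹ * x w110))⁻¹]
      rw [mul_right_inj]
      have key : (zgam h1 h2 ((x w101)⁻¹ * x w111) ((x w011)⁻¹ * x w001))⁻¹ *
          (zgam h1 h2 ((x w011)⁻¹ * x w001)⁻¹ (x w011)⁻¹ *
            zgam h1 h2 ((x w101)⁻¹ * x w111)⁻¹ (x w101)⁻¹) =
          (zgam h1 h2 ((x w100)⁻¹ * x w110) ((x w010)⁻¹ * x w000))⁻¹ *
          (zgam h1 h2 ((x w010)⁻¹ * x w000)⁻¹ (x w010)⁻¹ *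
            zgam h1 h2 ((x w100)⁻¹ * x w110)⁻¹ (x w100)⁻¹) := by
        simp only [zgam_inv_left h1 h2, zgam_inv_right h1 h2, inv_inv]
        simp only [zgam_congr_left h1 h2 hQq, zgam_congr_left h1 h2 hPp]
        simp only [zgam_congr_right h1 h2 hPp, zgam_congr_right h1 h2 hQq]
        simp only [zgam_congr_right h1 h2 h011, zgam_congr_right h1 h2 h101]
        have e000 : zgam h1 h2 ((x w100)⁻¹ * x w110) (x w000) =
            (zgam h1 h2 ((x w010)⁻¹ * x w000) (x w000))⁻¹ := by
          refine eq_inv_of_mul_eq_one_left ?_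
          rw [← zgam_mul_left h1 h2]
          exact zgam_F_left h1 h2 hQP _
        have e001 : zgam h1 h2 ((x w100)⁻¹ * x w110) (x w001) =
            (zgam h1 h2 ((x w010)⁻¹ * x w000) (x w001))⁻¹ := by
          refine eq_inv_of_mul_eq_one_left ?_
          rw [← zgam_mul_left h1 h2]
          exact zgam_F_left h1 h2 hQP _
        simp only [zgam_mul_right h1 h2, zgam_inv_right h1 h2, e000, e001, inv_inv]
        refine Additive.ofMul.injective ?_
        simp only [ofMul_mul, ofMul_inv]
        open IsMulCommutative in abel
      simpa using congrArg Subtype.val key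

end K3sub

section VtxEval

@[simp] lemma w000_0 : w000 0 = false := rfl
@[simp] lemma w000_1 : w000 1 = false := rfl
@[simp] lemma w000_2 : w000 2 = false := rfl
@[simp] lemma w001_0 : w001 0 = false := rfl
@[simp] lemma w001_1 : w001 1 = false := rfl
@[simp] lemma w001_2 : w001 2 = true := rfl
@[simp] lemma w010_0 : w010 0 = false := rfl
@[simp] lemma w010_1 : w010 1 = true := rfl
@[simp] lemma w010_2 : w010 2 = false := rfl
@[simp] lemma w011_0 : w011 0 = false := rfl
@[simp] lemma w011_1 : w011 1 = true := rfl
@[simp] lemma w011_2 : w011 2 = true := rfl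
@[simp] lemma w100_0 : w100 0 = true := rfl
@[simp] lemma w100_1 : w100 1 = false := rfl
@[simp] lemma w100_2 : w100 2 = false := rfl
@[simp] lemma w101_0 : w101 0 = true := rfl
@[simp] lemma w101_1 : w101 1 = false := rfl
@[simp] lemma w101_2 : w101 2 = true := rfl
@[simp] lemma w110_0 : w110 0 = true := rfl
@[simp] lemma w110_1 : w110 1 = true := rfl
@[simp] lemma w110_2 : w110 2 = false := rfl
@[simp] lemma w111_0 : w111 0 = true := rfl
@[simp] lemma w111_1 : w111 1 = true := rfl
@[simp] lemma w111_2 : w111 2 = true := rfl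

end VtxEval

section KK3

variable {G : Type} [Group G] {F : Subgroup G}
variable (h1 : commutator G ≤ F) (h2 : F ≤ Subgroup.center G)

lemma mem_K3'_iff (x : Cube G) :
    x ∈ K3' h1 h2 ↔ (dR x ∈ F ∧ d13 x ∈ F ∧ d23 x ∈ F ∧ dL x = dR x) := Iff.rfl

lemma mem_K2'_iff' (t : Quad G) : t ∈ K2' h1 ↔ d2 t ∈ F := Iff.rfl

include h1 h2 in
lemma KK3_le_K3' : faceGroup G ⊔ edgeGroup3 F ≤ K3' h1 h2 := by
  apply sup_le
  · rw [faceGroup, Subgroup.closure_le]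
    rintro x ⟨g, α, ⟨i, b, rfl⟩, rfl⟩
    rw [SetLike.mem_coe, mem_K3'_iff]
    fin_cases i <;> cases b <;>
      refine ⟨?_, ?_, ?_, ?_⟩ <;>
        simp [cubeElt, dR, dL, d13, d23, Set.mem_setOf_eq] <;>
          first | exact F.one_mem | rfl
  · rw [edgeGroup3, Subgroup.closure_le]
    rintro x ⟨u, hu, α, ⟨i, j, b, c, hij, rfl⟩, rfl⟩
    rw [SetLike.mem_coe, mem_K3'_iff]
    fin_cases i <;> fin_cases j <;> first
      | exact absurd rfl hij
      | (cases b <;> cases c <;>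
          refine ⟨?_, ?_, ?_, ?_⟩ <;>
            simp [cubeElt, dR, dL, d13, d23, Set.mem_setOf_eq] <;>
              first | exact F.one_mem | exact hu | exact F.inv_mem hu | rfl)

include h1 h2 in
lemma K3'_le_KK3 : K3' h1 h2 ≤ faceGroup G ⊔ edgeGroup3 F := by
  intro x hx
  obtain ⟨hR, h13, h23, hE⟩ := hx
  have key : x =
      cubeElt {v : Vtx | v 0 = false} (x w000) *
      cubeElt {v : Vtx | v 0 = true} (x w000) *
      cubeElt {v : Vtx | v 0 = true} ((x w000)⁻¹ * x w100) *
      cubeElt {v : Vtx | v 1 = true} ((x w000)⁻¹ * x w010) *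
      cubeElt {v : Vtx | v 2 = true} ((x w000)⁻¹ * x w001) *
      cubeElt {v : Vtx | v 0 = true ∧ v 1 = true} (dR x) *
      cubeElt {v : Vtx | v 0 = true ∧ v 2 = true} (d13 x) *
      cubeElt {v : Vtx | v 1 = true ∧ v 2 = true} (d23 x) := by
    funext v
    have hBIG : True := trivial
    rcases vtx_cases v with rfl | rfl | rfl | rfl | rfl | rfl | rfl | rfl
    · simp only [Pi.mul_apply, cubeElt, Set.mem_setOf_eq,
        w000_0, w000_1, w000_2, Bool.true_eq_false, Bool.false_eq_true, and_self, and_true,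
        and_false, true_and, false_and, if_true, if_false, ite_true, ite_false,
        d23, d13, dL, dR] <;> group
    · simp only [Pi.mul_apply, cubeElt, Set.mem_setOf_eq,
        w001_0, w001_1, w001_2, Bool.true_eq_false, Bool.false_eq_true, and_self, and_true,
        and_false, true_and, false_and, if_true, if_false, ite_true, ite_false,
        d23, d13, dL, dR] <;> group
    · simp only [Pi.mul_apply, cubeElt, Set.mem_setOf_eq,
        w010_0, w010_1, w010_2, Bool.true_eq_false, Bool.false_eq_true, and_self, and_true,
        and_false, true_and, false_and, if_true, if_false, ite_true, ite_false,
        d23, d13, dL, dR] <;> group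
    · simp only [Pi.mul_apply, cubeElt, Set.mem_setOf_eq,
        w011_0, w011_1, w011_2, Bool.true_eq_false, Bool.false_eq_true, and_self, and_true,
        and_false, true_and, false_and, if_true, if_false, ite_true, ite_false,
        d23, d13, dL, dR] <;> group
    · simp only [Pi.mul_apply, cubeElt, Set.mem_setOf_eq,
        w100_0, w100_1, w100_2, Bool.true_eq_false, Bool.false_eq_true, and_self, and_true,
        and_false, true_and, false_and, if_true, if_false, ite_true, ite_false,
        d23, d13, dL, dR] <;> group
    · simp only [Pi.mul_apply, cubeElt, Set.mem_setOf_eq,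
        w101_0, w101_1, w101_2, Bool.true_eq_false, Bool.false_eq_true, and_self, and_true,
        and_false, true_and, false_and, if_true, if_false, ite_true, ite_false,
        d23, d13, dL, dR] <;> group
    · simp only [Pi.mul_apply, cubeElt, Set.mem_setOf_eq,
        w110_0, w110_1, w110_2, Bool.true_eq_false, Bool.false_eq_true, and_self, and_true,
        and_false, true_and, false_and, if_true, if_false, ite_true, ite_false,
        d23, d13, dL, dR] <;> group
    · -- w111 : the interesting vertex
      simp only [Pi.mul_apply, cubeElt, Set.mem_setOf_eq,
        w111_0, w111_1, w111_2, Bool.true_eq_false, Bool.false_eq_true, and_self, and_true,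
        and_false, true_and, false_and, if_true, if_false, ite_true, ite_false,
        one_mul, mul_one]
      have key111 : x w111 = x w000 * ((x w000)⁻¹ * x w100) *
          (((x w000)⁻¹ * x w001) * d13 x * ((x w000)⁻¹ * x w001)⁻¹) *
          (((x w000)⁻¹ * x w010) * (((x w000)⁻¹ * x w001) * (d23 x * dL x))) := by
        simp only [d13, d23, dL]; group
      rw [key111, cen_conj h2 h13 ((x w000)⁻¹ * x w001), hE,
        shuffle3 h2 h13 h23 (x w000 * ((x w000)⁻¹ * x w100)) ((x w000)⁻¹ * x w010)
          ((x w000)⁻¹ * x w001) (dR x)]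
  rw [key]
  have hface : ∀ (g : G) (i : Fin 3) (b : Bool),
      cubeElt {v : Vtx | v i = b} g ∈ faceGroup G ⊔ edgeGroup3 F :=
    fun g i b => Subgroup.mem_sup_left (Subgroup.subset_closure ⟨g, _, ⟨i, b, rfl⟩, rfl⟩)
  have hedge : ∀ (u : G), u ∈ F → ∀ (i j : Fin 3) (b c : Bool), i ≠ j →
      cubeElt {v : Vtx | v i = b ∧ v j = c} u ∈ faceGroup G ⊔ edgeGroup3 F :=
    fun u hu i j b c hij =>
      Subgroup.mem_sup_right (Subgroup.subset_closure ⟨u, hu, _, ⟨i, j, b, c, hij, rfl⟩, rfl⟩)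
  refine Subgroup.mul_mem _ (Subgroup.mul_mem _ (Subgroup.mul_mem _ (Subgroup.mul_mem _
    (Subgroup.mul_mem _ (Subgroup.mul_mem _ (Subgroup.mul_mem _ ?_ ?_) ?_) ?_) ?_) ?_) ?_) ?_
  · exact hface (x w000) 0 false
  · exact hface (x w000) 0 true
  · exact hface ((x w000)⁻¹ * x w100) 0 true
  · exact hface ((x w000)⁻¹ * x w010) 1 true
  · exact hface ((x w000)⁻¹ * x w001) 2 true
  · exact hedge (dR x) hR 0 1 true true (by decide)
  · exact hedge (d13 x) h13 0 2 true true (by decide)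
  · exact hedge (d23 x) h23 1 2 true true (by decide)

include h1 h2 in
lemma mem_KK3_iff (x : Cube G) :
    x ∈ faceGroup G ⊔ edgeGroup3 F ↔
      (dR x ∈ F ∧ d13 x ∈ F ∧ d23 x ∈ F ∧ dL x = dR x) :=
  ⟨fun h => KK3_le_K3' h1 h2 h, fun h => K3'_le_KK3 h1 h2 h⟩

end KK3

section ChunkD

variable {G : Type} [Group G] {F : Subgroup G}
variable (h1 : commutator G ≤ F) (h2 : F ≤ Subgroup.center G)

include h2 in
lemma quadSub_normal : (quadSub F).Normal := by
  constructor
  intro n hn g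
  rw [mem_quadSub_iff] at hn ⊢
  obtain ⟨ha, hb, hc, hd⟩ := hn
  refine ⟨?_, ?_, ?_, ?_⟩ <;>
    simp only [Prod.fst_mul, Prod.snd_mul, Prod.fst_inv, Prod.snd_inv]
  · rw [cen_conj h2 ha]; exact ha
  · rw [cen_conj h2 hb]; exact hb
  · rw [cen_conj h2 hc]; exact hc
  · rw [cen_conj h2 hd]; exact hd

include h2 in
lemma edge3_le_center : edgeGroup3 F ≤ Subgroup.center (Cube G) := by
  rw [edgeGroup3, Subgroup.closure_le]
  rintro x ⟨u, hu, α, hα, rfl⟩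
  rw [SetLike.mem_coe, Subgroup.mem_center_iff]
  intro y
  funext v
  simp only [Pi.mul_apply, cubeElt]
  split
  · exact (Fcomm h2 hu (y v)).symm
  · simp

include h2 in
lemma edge3_normal : (edgeGroup3 F).Normal := by
  constructor
  intro n hn g
  have hc := Subgroup.mem_center_iff.mp (edge3_le_center h2 hn) g
  have e : g * n * g⁻¹ = n := by rw [hc]; group
  rw [e]; exact hn

lemma xor_eq_iff (a c b : Bool) : (xor a c = b) ↔ (a = xor b c) := by
  revert a c b; decide

/-- precomposition with a symmetry of the cube. -/
def compHom (ρ : Vtx → Vtx) : Cube G →* Cube G where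
  toFun x := fun v => x (ρ v)
  map_one' := rfl
  map_mul' _ _ := rfl

lemma isFace_preimage (σ : Equiv.Perm (Fin 3)) (c : Vtx) {α : Set Vtx} (hα : IsFace3 α) :
    IsFace3 {v | cubeSym σ c v ∈ α} := by
  obtain ⟨i, b, rfl⟩ := hα
  refine ⟨σ i, xor b (c i), ?_⟩
  ext v
  simp only [Set.mem_setOf_eq, cubeSym]
  exact xor_eq_iff _ _ _

lemma isEdge_preimage (σ : Equiv.Perm (Fin 3)) (c : Vtx) {α : Set Vtx} (hα : IsEdge3 α) :
    IsEdge3 {v | cubeSym σ c v ∈ α} := by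
  obtain ⟨i, j, b, b', hij, rfl⟩ := hα
  refine ⟨σ i, σ j, xor b (c i), xor b' (c j), fun h => hij (σ.injective h), ?_⟩
  ext v
  simp only [Set.mem_setOf_eq, cubeSym]
  exact and_congr (xor_eq_iff _ _ _) (xor_eq_iff _ _ _)

lemma KK3_comp (σ : Equiv.Perm (Fin 3)) (c : Vtx) {x : Cube G}
    (hx : x ∈ faceGroup G ⊔ edgeGroup3 F) :
    (fun v => x (cubeSym σ c v)) ∈ faceGroup G ⊔ edgeGroup3 F := by
  have hle : faceGroup G ⊔ edgeGroup3 F ≤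
      Subgroup.comap (compHom (cubeSym σ c)) (faceGroup G ⊔ edgeGroup3 F) := by
    apply sup_le
    · rw [faceGroup, Subgroup.closure_le]
      rintro y ⟨g, α, hα, rfl⟩
      rw [SetLike.mem_coe, Subgroup.mem_comap]
      have e : compHom (cubeSym σ c) (cubeElt α g) =
          cubeElt {v | cubeSym σ c v ∈ α} g := rfl
      rw [e]
      exact Subgroup.mem_sup_left
        (Subgroup.subset_closure ⟨g, _, isFace_preimage σ c hα, rfl⟩)
    · rw [edgeGroup3, Subgroup.closure_le]
      rintro y ⟨u, hu, α, hα, rfl⟩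
      rw [SetLike.mem_coe, Subgroup.mem_comap]
      have e : compHom (cubeSym σ c) (cubeElt α u) =
          cubeElt {v | cubeSym σ c v ∈ α} u := rfl
      rw [e]
      exact Subgroup.mem_sup_right
        (Subgroup.subset_closure ⟨u, hu, _, isEdge_preimage σ c hα, rfl⟩)
  exact hle hx

@[simp] lemma quadAt_ff {X : Type} (p : Quad X) : quadAt p false false = p.1 := rfl
@[simp] lemma quadAt_ft {X : Type} (p : Quad X) : quadAt p false true = p.2.1 := rfl
@[simp] lemma quadAt_tf {X : Type} (p : Quad X) : quadAt p true false = p.2.2.1 := rfl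
@[simp] lemma quadAt_tt {X : Type} (p : Quad X) : quadAt p true true = p.2.2.2 := rfl

/-- the diagonal join homomorphism -/
def joinD : Quad G →* Cube G where
  toFun t := joinQuad t t
  map_one' := by
    funext v
    cases h0 : v 0 <;> cases h1 : v 1 <;> cases h2 : v 2 <;>
      simp [joinQuad, quadAt, h0, h1, h2, Prod.fst_one, Prod.snd_one]
  map_mul' s t := by
    funext v
    cases h0 : v 0 <;> cases h1 : v 1 <;> cases h2 : v 2 <;>
      simp [joinQuad, quadAt, h0, h1, h2, Prod.fst_mul, Prod.snd_mul]

include h1 h2 in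
lemma joinD_mem {t : Quad G} (ht : t ∈ edgeGroup2 G ⊔ quadSub F) :
    joinD t ∈ faceGroup G ⊔ edgeGroup3 F := by
  rw [mem_KK2_iff h1] at ht
  rw [mem_KK3_iff h1 h2]
  refine ⟨?_, ?_, ?_, ?_⟩ <;>
    simp [dR, d13, d23, dL, joinD, joinQuad] <;>
      first | exact F.one_mem | (simpa [d2] using ht)

include h1 h2 in
lemma face_mem {x : Cube G} (hx : x ∈ faceGroup G ⊔ edgeGroup3 F) (i : Fin 3) (b : Bool) :
    face x i b ∈ edgeGroup2 G ⊔ quadSub F := by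
  rw [mem_KK3_iff h1 h2] at hx
  obtain ⟨hR, h13, h23, hE⟩ := hx
  have hL : dL x ∈ F := by rw [hE]; exact hR
  rw [mem_KK2_iff h1]
  fin_cases i <;> cases b
  · show d2 (x w000, x w001, x w010, x w011) ∈ F
    exact mem_F_comb1 h1 h23 (by simp only [d2, d23, abm_mul, abm_inv] <;> abel)
  · show d2 (x w100, x w101, x w110, x w111) ∈ F
    exact mem_F_comb3 h1 hL h23 hR
      (by simp only [d2, dL, dR, d23, abm_mul, abm_inv] <;> abel)
  · show d2 (x w000, x w001, x w100, x w101) ∈ F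
    exact mem_F_comb1 h1 h13 (by simp only [d2, d13, abm_mul, abm_inv] <;> abel)
  · show d2 (x w010, x w011, x w110, x w111) ∈ F
    exact mem_F_comb3 h1 hL h13 hR
      (by simp only [d2, dL, dR, d13, abm_mul, abm_inv] <;> abel)
  · show d2 (x w000, x w010, x w100, x w110) ∈ F
    exact mem_F_comb1 h1 hR (by simp only [d2, dR, abm_mul, abm_inv] <;> abel)
  · show d2 (x w001, x w011, x w101, x w111) ∈ F
    exact mem_F_comb1 h1 hL (by simp only [d2, dL, abm_mul, abm_inv] <;> abel)

end ChunkD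

section ChunkE

@[simp] lemma vec3_0 {α : Type} (a b c : α) : ![a, b, c] 0 = a := rfl
@[simp] lemma vec3_1 {α : Type} (a b c : α) : ![a, b, c] 1 = b := rfl
@[simp] lemma vec3_2 {α : Type} (a b c : α) : ![a, b, c] 2 = c := rfl

/-- an explicit cube from 8 group elements -/
def mkCube {G : Type} (g0 g1 g2 g3 g4 g5 g6 g7 : G) : Cube G := fun v =>
  if v 0 = false then
    (if v 1 = false then (if v 2 = false then g0 else g1) else (if v 2 = false then g2 else g3))
  else
    (if v 1 = false then (if v 2 = false then g4 else g5) else (if v 2 = false then g6 else g7))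

variable {G : Type}

@[simp] lemma mkCube_000 (g0 g1 g2 g3 g4 g5 g6 g7 : G) :
    mkCube g0 g1 g2 g3 g4 g5 g6 g7 w000 = g0 := rfl
@[simp] lemma mkCube_001 (g0 g1 g2 g3 g4 g5 g6 g7 : G) :
    mkCube g0 g1 g2 g3 g4 g5 g6 g7 w001 = g1 := rfl
@[simp] lemma mkCube_010 (g0 g1 g2 g3 g4 g5 g6 g7 : G) :
    mkCube g0 g1 g2 g3 g4 g5 g6 g7 w010 = g2 := rfl
@[simp] lemma mkCube_011 (g0 g1 g2 g3 g4 g5 g6 g7 : G) :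
    mkCube g0 g1 g2 g3 g4 g5 g6 g7 w011 = g3 := rfl
@[simp] lemma mkCube_100 (g0 g1 g2 g3 g4 g5 g6 g7 : G) :
    mkCube g0 g1 g2 g3 g4 g5 g6 g7 w100 = g4 := rfl
@[simp] lemma mkCube_101 (g0 g1 g2 g3 g4 g5 g6 g7 : G) :
    mkCube g0 g1 g2 g3 g4 g5 g6 g7 w101 = g5 := rfl
@[simp] lemma mkCube_110 (g0 g1 g2 g3 g4 g5 g6 g7 : G) :
    mkCube g0 g1 g2 g3 g4 g5 g6 g7 w110 = g6 := rfl
@[simp] lemma mkCube_111 (g0 g1 g2 g3 g4 g5 g6 g7 : G) :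
    mkCube g0 g1 g2 g3 g4 g5 g6 g7 w111 = g7 := rfl

@[simp] lemma joinQuad_000 {X : Type} (p q : Quad X) : joinQuad p q w000 = p.1 := rfl
@[simp] lemma joinQuad_001 {X : Type} (p q : Quad X) : joinQuad p q w001 = p.2.1 := rfl
@[simp] lemma joinQuad_010 {X : Type} (p q : Quad X) : joinQuad p q w010 = p.2.2.1 := rfl
@[simp] lemma joinQuad_011 {X : Type} (p q : Quad X) : joinQuad p q w011 = p.2.2.2 := rfl
@[simp] lemma joinQuad_100 {X : Type} (p q : Quad X) : joinQuad p q w100 = q.1 := rfl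
@[simp] lemma joinQuad_101 {X : Type} (p q : Quad X) : joinQuad p q w101 = q.2.1 := rfl
@[simp] lemma joinQuad_110 {X : Type} (p q : Quad X) : joinQuad p q w110 = q.2.2.1 := rfl
@[simp] lemma joinQuad_111 {X : Type} (p q : Quad X) : joinQuad p q w111 = q.2.2.2 := rfl

lemma quadAt_map4 {X Y : Type} (f : X → Y) (p : Quad X) (b c : Bool) :
    quadAt (map4 f p) b c = f (quadAt p b c) := by
  cases b <;> cases c <;> rfl

variable [Group G] {F Γ : Subgroup G}

lemma mk_mul_mem {a γ : G} (hγ : γ ∈ Γ) :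
    (QuotientGroup.mk (a * γ) : G ⧸ Γ) = QuotientGroup.mk a := by
  rw [QuotientGroup.eq]
  have e : (a * γ)⁻¹ * a = γ⁻¹ := by group
  rw [e]; exact Γ.inv_mem hγ

lemma flip0_eval (v : Vtx) :
    cubeSym (1 : Equiv.Perm (Fin 3)) ![true, false, false] v = ![!(v 0), v 1, v 2] := by
  funext j
  fin_cases j <;>
    simp [cubeSym, Equiv.Perm.coe_one, Bool.xor_true, Bool.xor_false]

section TopLemmas

variable (h1 : commutator G ≤ F) (h2 : F ≤ Subgroup.center G)

include h1 h2 in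
/-- existence of the top vertex at the group level -/
lemma top_exists {u1 u2 u3 u4 k1 k2 k3 k4 w1 w2 w3 w4 : G}
    (hu : d2 (u1, u2, u3, u4) ∈ F) (hw : d2 (w1, w2, w3, w4) ∈ F)
    (hk : d2 (k1, k2, k3, k4) ∈ F) :
    ∃ y : Cube G, y ∈ faceGroup G ⊔ edgeGroup3 F ∧
      y w000 = u1 ∧ y w001 = u2 ∧ y w010 = u3 ∧ y w011 = u4 ∧
      y w100 = k3 * (u1⁻¹ * k1)⁻¹ ∧ y w101 = k4 * (u2⁻¹ * k2)⁻¹ ∧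
      y w110 = w4 * (((u1⁻¹ * w1)⁻¹ * ((u1⁻¹ * k1) * (k3⁻¹ * w3)))⁻¹ * (u3⁻¹ * w2)⁻¹) := by
  set γ0 := u1⁻¹ * k1 with hγ0
  set γ1 := u2⁻¹ * k2 with hγ1
  set δ0 := u1⁻¹ * w1 with hδ0
  set δ1 := u3⁻¹ * w2 with hδ1
  set δ2 := k3⁻¹ * w3 with hδ2
  set μ := δ0⁻¹ * (γ0 * δ2) with hμ
  set y100 := k3 * γ0⁻¹ with hy100
  set y101 := k4 * γ1⁻¹ with hy101
  set y110 := w4 * (μ⁻¹ * δ1⁻¹) with hy110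
  set y111 := y101 * u2⁻¹ * (u4 * (u3⁻¹ * (u1 * (y100⁻¹ * y110)))) with hy111
  refine ⟨mkCube u1 u2 u3 u4 y100 y101 y110 y111, ?_, by simp, by simp, by simp, by simp,
    by simp, by simp, by simp⟩
  rw [mem_KK3_iff h1 h2]
  refine ⟨?_, ?_, ?_, ?_⟩
  · -- dR ∈ F
    have e : dR (mkCube u1 u2 u3 u4 y100 y101 y110 y111) =
        δ1 * (d2 (w1, w2, w3, w4) * gam (w4⁻¹ * w3)⁻¹ μ⁻¹) * δ1⁻¹ := by
      simp only [dR, mkCube_000, mkCube_010, mkCube_100, mkCube_110,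
        hy100, hy110, hμ, hδ0, hδ1, hδ2, hγ0, d2, gam]
      group
    rw [e, cen_conj h2 (F.mul_mem hw (gam_mem h1 _ _))]
    exact F.mul_mem hw (gam_mem h1 _ _)
  · -- d13 ∈ F
    have e : d13 (mkCube u1 u2 u3 u4 y100 y101 y110 y111) =
        γ1 * d2 (k1, k2, k3, k4) * γ1⁻¹ := by
      simp only [d13, mkCube_000, mkCube_001, mkCube_100, mkCube_101,
        hy100, hy101, hγ0, hγ1, d2]
      group
    rw [e, cen_conj h2 hk]
    exact hk
  · -- d23 ∈ F
    have e : d23 (mkCube u1 u2 u3 u4 y100 y101 y110 y111) = d2 (u1, u2, u3, u4) := by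
      simp only [d23, mkCube_000, mkCube_001, mkCube_010, mkCube_011, d2]
    rw [e]; exact hu
  · -- dL = dR
    simp only [dL, dR, mkCube_000, mkCube_001, mkCube_010, mkCube_011,
      mkCube_100, mkCube_101, mkCube_110, mkCube_111, hy111]
    group

include h1 h2 in
/-- uniqueness of the top vertex -/
lemma top_unique (h3 : Γ ⊓ F = ⊥) {y y' : Cube G}
    (hy : y ∈ faceGroup G ⊔ edgeGroup3 F) (hy' : y' ∈ faceGroup G ⊔ edgeGroup3 F)
    (hl : ∀ v : Vtx, v ≠ w111 → (QuotientGroup.mk (y v) : G ⧸ Γ) = QuotientGroup.mk (y' v)) :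
    (QuotientGroup.mk (y w111) : G ⧸ Γ) = QuotientGroup.mk (y' w111) := by
  have hz := Subgroup.mul_mem _ (Subgroup.inv_mem _ hy) hy'
  rw [mem_KK3_iff h1 h2] at hz
  obtain ⟨hzR, hz13, hz23, hzE⟩ := hz
  set z : Cube G := y⁻¹ * y' with hzdef
  have zval : ∀ v : Vtx, z v = (y v)⁻¹ * y' v := fun v => rfl
  have zmem : ∀ v : Vtx, v ≠ w111 → z v ∈ Γ := by
    intro v hv
    rw [zval]
    exact (QuotientGroup.eq).mp (hl v hv)
  have h000 : z w000 ∈ Γ := zmem _ (by decide)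
  have h001 : z w001 ∈ Γ := zmem _ (by decide)
  have h010 : z w010 ∈ Γ := zmem _ (by decide)
  have h011 : z w011 ∈ Γ := zmem _ (by decide)
  have h100 : z w100 ∈ Γ := zmem _ (by decide)
  have h101 : z w101 ∈ Γ := zmem _ (by decide)
  have h110 : z w110 ∈ Γ := zmem _ (by decide)
  have hdR1 : dR z = 1 := by
    have hΓ : dR z ∈ Γ :=
      Γ.mul_mem (Γ.mul_mem (Γ.mul_mem (Γ.inv_mem h010) h000) (Γ.inv_mem h100)) h110
    have : dR z ∈ Γ ⊓ F := ⟨hΓ, hzR⟩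
    rwa [h3, Subgroup.mem_bot] at this
  have hdL1 : dL z = 1 := by rw [hzE]; exact hdR1
  have e111 : z w111 = z w101 * ((z w001)⁻¹ * (z w011 * dL z)) := by
    simp only [dL]; group
  have hz111 : z w111 ∈ Γ := by
    rw [e111, hdL1, mul_one]
    exact Γ.mul_mem h101 (Γ.mul_mem (Γ.inv_mem h001) h011)
  have e : y' w111 = y w111 * z w111 := by rw [zval]; group
  rw [e, mk_mul_mem hz111]

end TopLemmas

end ChunkE

/-- (Nilparallelepiped structures.) If `G₂ ⊆ F ⊆ Z(G)`, `Γ ∩ F = {1}` and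
`π : G → G/Γ` is the coset projection, then the coordinatewise images of
`G^{[2,1]}·F^{[2]}` and `G^{[3,2]}·F^{[3,1]}` under `π` form a strong parallelepiped
structure on `G/Γ`. -/
theorem nil_parallelepiped (G : Type) [Group G] (F Γ : Subgroup G)
    (h1 : commutator G ≤ F) (h2 : F ≤ Subgroup.center G) (h3 : Γ ⊓ F = ⊥) :
    IsStrongParallelepiped
      (map4 (QuotientGroup.mk : G → G ⧸ Γ) ''
        ((edgeGroup2 G : Set (Quad G)) * (quadSub F : Set (Quad G))))
      (mapCube (QuotientGroup.mk : G → G ⧸ Γ) ''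
        ((faceGroup G : Set (Cube G)) * (edgeGroup3 F : Set (Cube G)))) := by
  haveI hN2 : (quadSub F).Normal := quadSub_normal h2
  haveI hN3 : (edgeGroup3 F).Normal := edge3_normal h2
  rw [← Subgroup.mul_normal (edgeGroup2 G) (quadSub F),
    ← Subgroup.mul_normal (faceGroup G) (edgeGroup3 F)]
  have hmk : Function.Surjective (QuotientGroup.mk : G → G ⧸ Γ) :=
    QuotientGroup.mk_surjective
  -- Q is invariant under cube symmetries
  have hsymQ : ∀ (σ : Equiv.Perm (Fin 3)) (c : Vtx),
      ∀ X ∈ mapCube (QuotientGroup.mk : G → G ⧸ Γ) ''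
        ((faceGroup G ⊔ edgeGroup3 F : Subgroup (Cube G)) : Set (Cube G)),
      (fun v => X (cubeSym σ c v)) ∈ mapCube (QuotientGroup.mk : G → G ⧸ Γ) ''
        ((faceGroup G ⊔ edgeGroup3 F : Subgroup (Cube G)) : Set (Cube G)) := by
    rintro σ c X ⟨y, hy, rfl⟩
    exact ⟨fun v => y (cubeSym σ c v),
      SetLike.mem_coe.mpr (KK3_comp σ c (SetLike.mem_coe.mp hy)), rfl⟩
  -- existence of the top vertex
  have hex : ∀ x000 x001 x010 x011 x100 x101 x110 : G ⧸ Γ,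
      (x000, x001, x010, x011) ∈ map4 (QuotientGroup.mk : G → G ⧸ Γ) ''
        ((edgeGroup2 G ⊔ quadSub F : Subgroup (Quad G)) : Set (Quad G)) →
      (x000, x010, x100, x110) ∈ map4 (QuotientGroup.mk : G → G ⧸ Γ) ''
        ((edgeGroup2 G ⊔ quadSub F : Subgroup (Quad G)) : Set (Quad G)) →
      (x000, x001, x100, x101) ∈ map4 (QuotientGroup.mk : G → G ⧸ Γ) ''
        ((edgeGroup2 G ⊔ quadSub F : Subgroup (Quad G)) : Set (Quad G)) →
      ∃ x111, joinQuad (x000, x001, x010, x011) (x100, x101, x110, x111) ∈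
        mapCube (QuotientGroup.mk : G → G ⧸ Γ) ''
          ((faceGroup G ⊔ edgeGroup3 F : Subgroup (Cube G)) : Set (Cube G)) := by
    intro x000 x001 x010 x011 x100 x101 x110 hA hB hC
    obtain ⟨⟨u1, u2, u3, u4⟩, hu, hequ⟩ := hA
    obtain ⟨⟨w1, w2, w3, w4⟩, hw, heqw⟩ := hB
    obtain ⟨⟨k1, k2, k3, k4⟩, hk, heqk⟩ := hC
    simp only [map4, Prod.mk.injEq] at hequ heqw heqk
    obtain ⟨eu1, eu2, eu3, eu4⟩ := hequ
    obtain ⟨ew1, ew2, ew3, ew4⟩ := heqw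
    obtain ⟨ek1, ek2, ek3, ek4⟩ := heqk
    rw [SetLike.mem_coe, mem_KK2_iff h1] at hu hw hk
    obtain ⟨y, hyK, ey0, ey1, ey2, ey3, ey4, ey5, ey6⟩ := top_exists h1 h2 hu hw hk
    have hγ0 : u1⁻¹ * k1 ∈ Γ := (QuotientGroup.eq).mp (by rw [eu1, ek1])
    have hγ1 : u2⁻¹ * k2 ∈ Γ := (QuotientGroup.eq).mp (by rw [eu2, ek2])
    have hδ0 : u1⁻¹ * w1 ∈ Γ := (QuotientGroup.eq).mp (by rw [eu1, ew1])
    have hδ1 : u3⁻¹ * w2 ∈ Γ := (QuotientGroup.eq).mp (by rw [eu3, ew2])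
    have hδ2 : k3⁻¹ * w3 ∈ Γ := (QuotientGroup.eq).mp (by rw [ek3, ew3])
    refine ⟨QuotientGroup.mk (y w111), y, hyK, ?_⟩
    funext v
    rcases vtx_cases v with rfl | rfl | rfl | rfl | rfl | rfl | rfl | rfl
    · show QuotientGroup.mk (y w000) = _
      rw [ey0, eu1]; rfl
    · show QuotientGroup.mk (y w001) = _
      rw [ey1, eu2]; rfl
    · show QuotientGroup.mk (y w010) = _
      rw [ey2, eu3]; rfl
    · show QuotientGroup.mk (y w011) = _
      rw [ey3, eu4]; rfl
    · show QuotientGroup.mk (y w100) = _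
      rw [ey4, mk_mul_mem (Γ.inv_mem hγ0), ek3]; rfl
    · show QuotientGroup.mk (y w101) = _
      rw [ey5, mk_mul_mem (Γ.inv_mem hγ1), ek4]; rfl
    · show QuotientGroup.mk (y w110) = _
      rw [ey6, mk_mul_mem (Γ.mul_mem
        (Γ.inv_mem (Γ.mul_mem (Γ.inv_mem hδ0) (Γ.mul_mem hγ0 hδ2)))
        (Γ.inv_mem hδ1)), ew4]
      rfl
    · rfl
  -- uniqueness of the top vertex
  have huni : ∀ x000 x001 x010 x011 x100 x101 x110 : G ⧸ Γ, ∀ t t' : G ⧸ Γ,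
      joinQuad (x000, x001, x010, x011) (x100, x101, x110, t) ∈
        mapCube (QuotientGroup.mk : G → G ⧸ Γ) ''
          ((faceGroup G ⊔ edgeGroup3 F : Subgroup (Cube G)) : Set (Cube G)) →
      joinQuad (x000, x001, x010, x011) (x100, x101, x110, t') ∈
        mapCube (QuotientGroup.mk : G → G ⧸ Γ) ''
          ((faceGroup G ⊔ edgeGroup3 F : Subgroup (Cube G)) : Set (Cube G)) →
      t = t' := by
    intro x000 x001 x010 x011 x100 x101 x110 t t' hJ hJ'
    obtain ⟨y, hy, hey⟩ := hJ
    obtain ⟨y', hy', hey'⟩ := hJ'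
    have hyv : ∀ v, (QuotientGroup.mk (y v) : G ⧸ Γ) =
        joinQuad (x000, x001, x010, x011) (x100, x101, x110, t) v := fun v => congrFun hey v
    have hyv' : ∀ v, (QuotientGroup.mk (y' v) : G ⧸ Γ) =
        joinQuad (x000, x001, x010, x011) (x100, x101, x110, t') v := fun v => congrFun hey' v
    have hl : ∀ v : Vtx, v ≠ w111 →
        (QuotientGroup.mk (y v) : G ⧸ Γ) = QuotientGroup.mk (y' v) := by
      intro v hv
      rcases vtx_cases v with rfl | rfl | rfl | rfl | rfl | rfl | rfl | rfl <;>
        first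
          | exact absurd rfl hv
          | (rw [hyv, hyv'] <;> rfl)
    have := top_unique h1 h2 h3 (SetLike.mem_coe.mp hy) (SetLike.mem_coe.mp hy') hl
    have et : t = QuotientGroup.mk (y w111) := by rw [hyv w111]; rfl
    have et' : t' = QuotientGroup.mk (y' w111) := by rw [hyv' w111]; rfl
    rw [et, et', this]
  refine ⟨⟨⟨?_, ?_, ?_, ?_, ?_⟩, ?_, ?_, ?_, ?_, ?_, ?_⟩, ?_⟩
  · -- refl
    intro a b
    obtain ⟨g, rfl⟩ := hmk a
    obtain ⟨h, rfl⟩ := hmk b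
    refine ⟨(g, h, g, h), SetLike.mem_coe.mpr ((mem_KK2_iff h1 _).mpr ?_), rfl⟩
    have e : d2 (g, h, g, h) = 1 := by simp only [d2]; group
    rw [e]; exact F.one_mem
  · -- symm
    intro a b c d h
    obtain ⟨⟨u1, u2, u3, u4⟩, hu, hequ⟩ := h
    simp only [map4, Prod.mk.injEq] at hequ
    obtain ⟨e1, e2, e3, e4⟩ := hequ
    rw [SetLike.mem_coe, mem_KK2_iff h1] at hu
    refine ⟨(u3, u4, u1, u2), SetLike.mem_coe.mpr ((mem_KK2_iff h1 _).mpr ?_), ?_⟩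
    · have e : d2 (u3, u4, u1, u2) = (d2 (u1, u2, u3, u4))⁻¹ := by
        simp only [d2]; group
      rw [e]; exact F.inv_mem hu
    · simp only [map4, Prod.mk.injEq]
      exact ⟨e3, e4, e1, e2⟩
  · -- trans
    intro a b c d e f hab hcd
    obtain ⟨⟨u1, u2, u3, u4⟩, hu, hequ⟩ := hab
    obtain ⟨⟨k1, k2, k3, k4⟩, hk, heqk⟩ := hcd
    simp only [map4, Prod.mk.injEq] at hequ heqk
    obtain ⟨e1, e2, e3, e4⟩ := hequ
    obtain ⟨f1, f2, f3, f4⟩ := heqk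
    have hγ : u3⁻¹ * k1 ∈ Γ := (QuotientGroup.eq).mp (by rw [e3, f1])
    have hγ' : u4⁻¹ * k2 ∈ Γ := (QuotientGroup.eq).mp (by rw [e4, f2])
    have hmid : (u3, u4, u3, u4) ∈ (edgeGroup2 G ⊔ quadSub F : Subgroup (Quad G)) := by
      rw [mem_KK2_iff h1]
      have e : d2 (u3, u4, u3, u4) = 1 := by simp only [d2]; group
      rw [e]; exact F.one_mem
    have hm : (u1 * (u3⁻¹ * k1), u2 * (u4⁻¹ * k2), k3, k4) ∈
        (edgeGroup2 G ⊔ quadSub F : Subgroup (Quad G)) := by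
      have key : (u1 * (u3⁻¹ * k1), u2 * (u4⁻¹ * k2), k3, k4) =
          (u1, u2, u3, u4) * (u3, u4, u3, u4)⁻¹ * (k1, k2, k3, k4) := by
        simp only [Prod.ext_iff, Prod.fst_mul, Prod.snd_mul, Prod.fst_inv, Prod.snd_inv]
        refine ⟨by group, by group, by group, by group⟩
      rw [key]
      exact Subgroup.mul_mem _ (Subgroup.mul_mem _ (SetLike.mem_coe.mp hu)
        (Subgroup.inv_mem _ hmid)) (SetLike.mem_coe.mp hk)
    refine ⟨(u1 * (u3⁻¹ * k1), u2 * (u4⁻¹ * k2), k3, k4), SetLike.mem_coe.mpr hm, ?_⟩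
    simp only [map4, Prod.mk.injEq]
    exact ⟨by rw [mk_mul_mem hγ]; exact e1, by rw [mk_mul_mem hγ']; exact e2, f3, f4⟩
  · -- middle swap
    intro a b c d h
    obtain ⟨⟨u1, u2, u3, u4⟩, hu, hequ⟩ := h
    simp only [map4, Prod.mk.injEq] at hequ
    obtain ⟨e1, e2, e3, e4⟩ := hequ
    rw [SetLike.mem_coe, mem_KK2_iff h1] at hu
    refine ⟨(u1, u3, u2, u4), SetLike.mem_coe.mpr ((mem_KK2_iff h1 _).mpr ?_), ?_⟩
    · exact mem_F_comb1 h1 hu (by simp only [d2, abm_mul, abm_inv]; abel)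
    · simp only [map4, Prod.mk.injEq]
      exact ⟨e1, e3, e2, e4⟩
  · -- completion
    intro a b c
    obtain ⟨g, rfl⟩ := hmk a
    obtain ⟨h, rfl⟩ := hmk b
    obtain ⟨k, rfl⟩ := hmk c
    refine ⟨QuotientGroup.mk (k * (g⁻¹ * h)),
      (g, h, k, k * (g⁻¹ * h)), SetLike.mem_coe.mpr ((mem_KK2_iff h1 _).mpr ?_), rfl⟩
    have e : d2 (g, h, k, k * (g⁻¹ * h)) = 1 := by simp only [d2]; group
    rw [e]; exact F.one_mem
  · -- faces
    rintro X ⟨y, hy, rfl⟩ i b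
    refine ⟨face y i b,
      SetLike.mem_coe.mpr (face_mem h1 h2 (SetLike.mem_coe.mp hy) i b), rfl⟩
  · -- symmetry invariance
    intro σ c X hX
    exact hsymQ σ c X hX
  · -- join refl
    rintro p ⟨t, ht, rfl⟩
    refine ⟨joinD t, SetLike.mem_coe.mpr (joinD_mem h1 h2 (SetLike.mem_coe.mp ht)), ?_⟩
    funext v
    show QuotientGroup.mk (joinQuad t t v) = _
    simp only [joinQuad, mapCube]
    split <;> rw [quadAt_map4]
  · -- join symm
    intro p q hpq
    have h := hsymQ 1 ![true, false, false] _ hpq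
    have e : (fun v => joinQuad p q (cubeSym 1 ![true, false, false] v)) = joinQuad q p := by
      funext v
      rw [flip0_eval v]
      rcases Bool.eq_false_or_eq_true (v 0) with h0 | h0 <;>
        simp [joinQuad, h0]
    rwa [e] at h
  · -- join trans
    intro p q r hpq hqr
    obtain ⟨y, hy, hey⟩ := hpq
    obtain ⟨z, hz, hez⟩ := hqr
    have hyK := SetLike.mem_coe.mp hy
    have hzK := SetLike.mem_coe.mp hz
    have hJf : ∀ v : Vtx, joinD (face y 0 true) v = y ![true, v 1, v 2] := by
      intro v
      have e : joinD (face y 0 true) v = quadAt (face y 0 true) (v 1) (v 2) := by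
        show joinQuad _ _ v = _
        unfold joinQuad
        split <;> rfl
      rw [e]
      rcases Bool.eq_false_or_eq_true (v 1) with h1' | h1' <;>
        rcases Bool.eq_false_or_eq_true (v 2) with h2' | h2' <;>
          rw [h1', h2'] <;> rfl
    have hmem : y * (joinD (face y 0 true))⁻¹ * z ∈
        (faceGroup G ⊔ edgeGroup3 F : Subgroup (Cube G)) :=
      Subgroup.mul_mem _ (Subgroup.mul_mem _ hyK
        (Subgroup.inv_mem _ (joinD_mem h1 h2 (face_mem h1 h2 hyK 0 true)))) hzK
    refine ⟨y * (joinD (face y 0 true))⁻¹ * z, SetLike.mem_coe.mpr hmem, ?_⟩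
    have hyv : ∀ v, (QuotientGroup.mk (y v) : G ⧸ Γ) = joinQuad p q v :=
      fun v => congrFun hey v
    have hzv : ∀ v, (QuotientGroup.mk (z v) : G ⧸ Γ) = joinQuad q r v :=
      fun v => congrFun hez v
    funext v
    show QuotientGroup.mk (y v * (joinD (face y 0 true) v)⁻¹ * z v) = joinQuad p r v
    rcases Bool.eq_false_or_eq_true (v 0) with h0 | h0
    · -- upper face
      have hv : v = ![true, v 1, v 2] := by
        conv_lhs => rw [vtx_eq v, h0]
      have e : y v * (joinD (face y 0 true) v)⁻¹ * z v = z v := by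
        rw [hJf v, ← hv]; group
      rw [e, hzv]
      simp [joinQuad, h0]
    · -- lower face
      have hγ : (y ![true, v 1, v 2])⁻¹ * z v ∈ Γ := by
        refine (QuotientGroup.eq).mp ?_
        rw [hyv, hzv]
        have e1 : joinQuad p q ![true, v 1, v 2] = quadAt q (v 1) (v 2) := by
          simp [joinQuad]
        have e2 : joinQuad q r v = quadAt q (v 1) (v 2) := by
          simp [joinQuad, h0]
        rw [e1, e2]
      have e : y v * (joinD (face y 0 true) v)⁻¹ * z v =
          y v * ((y ![true, v 1, v 2])⁻¹ * z v) := by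
        rw [hJf v]; group
      rw [e, mk_mul_mem hγ, hyv]
      simp [joinQuad, h0]
  · -- exists top (weak)
    intro x000 x001 x010 x011 x100 x101 x110 hA hB hC
    exact hex x000 x001 x010 x011 x100 x101 x110 hA hB hC
  · -- strong: unique top
    intro x000 x001 x010 x011 x100 x101 x110 hA hB hC
    obtain ⟨x111, hx111⟩ := hex x000 x001 x010 x011 x100 x101 x110 hA hB hC
    exact ⟨x111, hx111, fun t' ht' =>
      huni x000 x001 x010 x011 x100 x101 x110 t' x111 ht' hx111⟩

end HK
end

section
/- Let (𝒫,𝒬) be a strong parallelepiped structure on a nonempty set X. Then the structure group 𝒢 of (𝒫,𝒬) is 2-step nilpotent; that is, its second commutator subgroup [𝒢,[𝒢,𝒢]] is trivial. -/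
open scoped Pointwise

namespace HK

variable {X Y : Type}

section Aux

variable {X : Type} {P : Set (Quad X)} {Q : Set (Cube X)}

/-! ### Parallelogram lemmas -/

theorem Prefl (hP : IsWeakParallelogram P) (a b : X) : (a, b, a, b) ∈ P := hP.1 a b

theorem Psymm (hP : IsWeakParallelogram P) {a b c d : X} (hx : (a, b, c, d) ∈ P) :
    (c, d, a, b) ∈ P := hP.2.1 _ _ _ _ hx

theorem Ptrans (hP : IsWeakParallelogram P) {a b c d e f : X} (h1 : (a, b, c, d) ∈ P)
    (h2 : (c, d, e, f) ∈ P) : (a, b, e, f) ∈ P := hP.2.2.1 _ _ _ _ _ _ h1 h2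

theorem Pexch (hP : IsWeakParallelogram P) {a b c d : X} (hx : (a, b, c, d) ∈ P) :
    (a, c, b, d) ∈ P := hP.2.2.2.1 _ _ _ _ hx

theorem Pswap (hP : IsWeakParallelogram P) {a b c d : X} (hx : (a, b, c, d) ∈ P) :
    (b, a, d, c) ∈ P := Pexch hP (Psymm hP (Pexch hP hx))

theorem Paabb (hP : IsWeakParallelogram P) (a b : X) : (a, a, b, b) ∈ P :=
  Pexch hP (Prefl hP a b)

/-! ### Parallelepiped lemmas -/

theorem Qdiag (hQ : IsWeakParallelepiped P Q) {p : Quad X} (hp : p ∈ P) :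
    joinQuad p p ∈ Q := hQ.2.2.2.1 p hp

theorem Qflip (hQ : IsWeakParallelepiped P Q) {p q : Quad X} (hx : joinQuad p q ∈ Q) :
    joinQuad q p ∈ Q := hQ.2.2.2.2.1 p q hx

theorem Qtrans (hQ : IsWeakParallelepiped P Q) {p q r : Quad X} (h1 : joinQuad p q ∈ Q)
    (h2 : joinQuad q r ∈ Q) : joinQuad p r ∈ Q := hQ.2.2.2.2.2.1 p q r h1 h2

theorem Qsym01 (hQ : IsWeakParallelepiped P Q) {a b c d e f g' h' : X}
    (hx : joinQuad (a, b, c, d) (e, f, g', h') ∈ Q) :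
    joinQuad (a, b, e, f) (c, d, g', h') ∈ Q := by
  have key := hQ.2.2.1 (Equiv.swap 0 1) (fun _ => false) _ hx
  have heq : (fun v => joinQuad (a, b, c, d) (e, f, g', h')
      (cubeSym (Equiv.swap 0 1) (fun _ => false) v)) = joinQuad (a, b, e, f) (c, d, g', h') := by
    funext v
    have e0 : (Equiv.swap (0 : Fin 3) 1) 0 = 1 := by decide
    have e1 : (Equiv.swap (0 : Fin 3) 1) 1 = 0 := by decide
    have e2 : (Equiv.swap (0 : Fin 3) 1) 2 = 2 := by decide
    simp only [joinQuad, cubeSym, e0, e1, e2, Bool.xor_false]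
    cases hv0 : v 0 <;> cases hv1 : v 1 <;> cases hv2 : v 2 <;> simp [quadAt, hv0, hv1, hv2]
  rwa [heq] at key

theorem Qsym02 (hQ : IsWeakParallelepiped P Q) {a b c d e f g' h' : X}
    (hx : joinQuad (a, b, c, d) (e, f, g', h') ∈ Q) :
    joinQuad (a, e, c, g') (b, f, d, h') ∈ Q := by
  have key := hQ.2.2.1 (Equiv.swap 0 2) (fun _ => false) _ hx
  have heq : (fun v => joinQuad (a, b, c, d) (e, f, g', h')
      (cubeSym (Equiv.swap 0 2) (fun _ => false) v)) = joinQuad (a, e, c, g') (b, f, d, h') := by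
    funext v
    have e0 : (Equiv.swap (0 : Fin 3) 2) 0 = 2 := by decide
    have e1 : (Equiv.swap (0 : Fin 3) 2) 1 = 1 := by decide
    have e2 : (Equiv.swap (0 : Fin 3) 2) 2 = 0 := by decide
    simp only [joinQuad, cubeSym, e0, e1, e2, Bool.xor_false]
    cases hv0 : v 0 <;> cases hv1 : v 1 <;> cases hv2 : v 2 <;> simp [quadAt, hv0, hv1, hv2]
  rwa [heq] at key

theorem Qsym12 (hQ : IsWeakParallelepiped P Q) {a b c d e f g' h' : X}
    (hx : joinQuad (a, b, c, d) (e, f, g', h') ∈ Q) :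
    joinQuad (a, c, b, d) (e, g', f, h') ∈ Q := by
  have key := hQ.2.2.1 (Equiv.swap 1 2) (fun _ => false) _ hx
  have heq : (fun v => joinQuad (a, b, c, d) (e, f, g', h')
      (cubeSym (Equiv.swap 1 2) (fun _ => false) v)) = joinQuad (a, c, b, d) (e, g', f, h') := by
    funext v
    have e0 : (Equiv.swap (1 : Fin 3) 2) 0 = 0 := by decide
    have e1 : (Equiv.swap (1 : Fin 3) 2) 1 = 2 := by decide
    have e2 : (Equiv.swap (1 : Fin 3) 2) 2 = 1 := by decide
    simp only [joinQuad, cubeSym, e0, e1, e2, Bool.xor_false]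
    cases hv0 : v 0 <;> cases hv1 : v 1 <;> cases hv2 : v 2 <;> simp [quadAt, hv0, hv1, hv2]
  rwa [heq] at key

/-- The face `ε₂ = 0` of a `joinQuad` cube lies in `P`. -/
theorem Qface1 (hQ : IsWeakParallelepiped P Q) {a b c d e f g' h' : X}
    (hx : joinQuad (a, b, c, d) (e, f, g', h') ∈ Q) : (a, b, e, f) ∈ P := by
  have := hQ.2.1 _ hx 1 false
  have heq : face (joinQuad (a, b, c, d) (e, f, g', h')) 1 false = (a, b, e, f) := rfl
  rwa [heq] at this

/-! ### Structure set lemmas -/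

/-- For `g` in the structure set, `(g a, g b) ∼ (a, b)` for all `a, b`. -/
theorem star_mem (hQ : IsWeakParallelepiped P Q) {g : Equiv.Perm X}
    (hg : g ∈ structSet P Q) (a b : X) : (g a, g b, a, b) ∈ P := by
  have h1 := (hg _ (Prefl hQ.1 a b)).2
  exact Qface1 hQ h1

theorem structSet_one (hQ : IsWeakParallelepiped P Q) : (1 : Equiv.Perm X) ∈ structSet P Q := by
  intro p hp
  have hm : map4 (⇑(1 : Equiv.Perm X)) p = p := by
    simp [map4]
  rw [hm]
  exact ⟨hp, Qdiag hQ hp⟩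

theorem structSet_mul (hQ : IsWeakParallelepiped P Q) {g k : Equiv.Perm X}
    (hg : g ∈ structSet P Q) (hk : k ∈ structSet P Q) : g * k ∈ structSet P Q := by
  intro p hp
  have hm : map4 (⇑(g * k)) p = map4 (⇑g) (map4 (⇑k) p) := by
    simp [map4, Equiv.Perm.mul_apply]
  rw [hm]
  refine ⟨(hg _ (hk p hp).1).1, ?_⟩
  exact Qtrans hQ (hg _ (hk p hp).1).2 (hk p hp).2

theorem structSet_inv (hQ : IsWeakParallelepiped P Q) {g : Equiv.Perm X}
    (hg : g ∈ structSet P Q) : g⁻¹ ∈ structSet P Q := by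
  intro p hp
  obtain ⟨a, b, c, d⟩ := p
  have hab : (g⁻¹ a, g⁻¹ b, a, b) ∈ P := by
    have := star_mem hQ hg (g⁻¹ a) (g⁻¹ b)
    simp only [Equiv.Perm.coe_inv, Equiv.apply_symm_apply] at this
    exact Psymm hQ.1 this
  have hcd : (c, d, g⁻¹ c, g⁻¹ d) ∈ P := by
    have := star_mem hQ hg (g⁻¹ c) (g⁻¹ d)
    simpa only [Equiv.Perm.coe_inv, Equiv.apply_symm_apply] using this
  have hq : (g⁻¹ a, g⁻¹ b, g⁻¹ c, g⁻¹ d) ∈ P := Ptrans hQ.1 (Ptrans hQ.1 hab hp) hcd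
  have hmap : map4 (⇑g⁻¹) (a, b, c, d) = (g⁻¹ a, g⁻¹ b, g⁻¹ c, g⁻¹ d) := rfl
  rw [hmap]
  refine ⟨hq, ?_⟩
  have h2 := (hg _ hq).2
  have hmap2 : map4 (⇑g) (g⁻¹ a, g⁻¹ b, g⁻¹ c, g⁻¹ d) = (a, b, c, d) := by
    simp [map4, Equiv.Perm.coe_inv, Equiv.apply_symm_apply]
  rw [hmap2] at h2
  exact Qflip hQ h2

/-! ### Verticality of commutators and the key edge lemma -/

/-- For `g, f` in the structure set, `(fgu, fgu, fgu, gfu)` is a (vertical) parallelogram. -/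
theorem vertP (hQ : IsWeakParallelepiped P Q) {g f : Equiv.Perm X}
    (hg : g ∈ structSet P Q) (hf : f ∈ structSet P Q) (u : X) :
    (f (g u), f (g u), f (g u), g (f u)) ∈ P := by
  have h1 : (g (f u), g u, f u, u) ∈ P := star_mem hQ hg (f u) u
  have h2 : (g (f u), f u, g u, u) ∈ P := Pexch hQ.1 h1
  have h3 : (f (g u), f u, g u, u) ∈ P := star_mem hQ hf (g u) u
  have h4 : (g u, u, f (g u), f u) ∈ P := Psymm hQ.1 h3
  have h5 : (g (f u), f u, f (g u), f u) ∈ P := Ptrans hQ.1 h2 h4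
  have h6 : (g (f u), f (g u), f u, f u) ∈ P := Pexch hQ.1 h5
  have h7 : (f u, f u, f (g u), f (g u)) ∈ P := Paabb hQ.1 _ _
  have h8 : (g (f u), f (g u), f (g u), f (g u)) ∈ P := Ptrans hQ.1 h6 h7
  have h9 : (f (g u), f (g u), g (f u), f (g u)) ∈ P := Psymm hQ.1 h8
  exact Pswap hQ.1 h9

/-- Key lemma: the "vertical edge" parallelepiped associated to the commutator of two
structure maps is in `Q`. -/
theorem lemmaV (hQ : IsWeakParallelepiped P Q) {g f : Equiv.Perm X}
    (hg : g ∈ structSet P Q) (hf : f ∈ structSet P Q) (u v : X) :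
    joinQuad (f (g u), f (g u), f (g u), g (f u))
      (f (g v), f (g v), f (g v), g (f v)) ∈ Q := by
  -- C1 : g applied to (u, fu, v, fv)
  have hS1 : (u, f u, v, f v) ∈ P := Pswap hQ.1 (Pexch hQ.1 (star_mem hQ hf u v))
  have hC1 : joinQuad (g u, g (f u), g v, g (f v)) (u, f u, v, f v) ∈ Q := (hg _ hS1).2
  have hC1' : joinQuad (g u, u, g v, v) (g (f u), f u, g (f v), f v) ∈ Q := Qsym02 hQ hC1
  -- C2 : f applied to (gu, u, gv, v)
  have hP2 : (g u, u, g v, v) ∈ P := Pexch hQ.1 (star_mem hQ hg u v)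
  have hC2 : joinQuad (f (g u), f u, f (g v), f v) (g u, u, g v, v) ∈ Q := (hf _ hP2).2
  have hKEY : joinQuad (f (g u), f u, f (g v), f v) (g (f u), f u, g (f v), f v) ∈ Q :=
    Qtrans hQ hC2 hC1'
  have hK2 : joinQuad (f (g u), f (g v), f u, f v) (g (f u), g (f v), f u, f v) ∈ Q :=
    Qsym12 hQ hKEY
  have hK' : joinQuad (f (g u), f (g v), g (f u), g (f v)) (f u, f v, f u, f v) ∈ Q :=
    Qsym01 hQ hK2
  -- NEW : (fgu, fgv, fgu, fgv) ≈ (fu, fv, fu, fv)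
  have hC3 : joinQuad (f (g u), f (g v), f (g u), f (g v)) (g u, g v, g u, g v) ∈ Q :=
    (hf _ (Prefl hQ.1 (g u) (g v))).2
  have hC4 : joinQuad (g u, g v, g u, g v) (u, v, u, v) ∈ Q :=
    (hg _ (Prefl hQ.1 u v)).2
  have hC5 : joinQuad (u, v, u, v) (f u, f v, f u, f v) ∈ Q :=
    Qflip hQ (hf _ (Prefl hQ.1 u v)).2
  have hNEW : joinQuad (f (g u), f (g v), f (g u), f (g v)) (f u, f v, f u, f v) ∈ Q :=
    Qtrans hQ hC3 (Qtrans hQ hC4 hC5)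
  have hG' : joinQuad (f (g u), f (g v), f (g u), f (g v))
      (f (g u), f (g v), g (f u), g (f v)) ∈ Q := Qtrans hQ hNEW (Qflip hQ hK')
  exact Qsym02 hQ hG'

open scoped commutatorElement in
/-- Commutators of structure maps commute with all structure maps. -/
theorem comm_central (h : IsStrongParallelepiped P Q) {g f k : Equiv.Perm X}
    (hg : g ∈ structSet P Q) (hf : f ∈ structSet P Q) (hk : k ∈ structSet P Q) :
    k * ⁅g, f⁆ = ⁅g, f⁆ * k := by
  have hQ := h.1
  have key : ∀ x : X, g (f (g⁻¹ (f⁻¹ (k x)))) = k (g (f (g⁻¹ (f⁻¹ x)))) := by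
    intro x
    set u := g⁻¹ (f⁻¹ x) with hu
    set v := g⁻¹ (f⁻¹ (k x)) with hv
    have hgu : f (g u) = x := by rw [hu]; simp [Equiv.Perm.coe_inv, Equiv.apply_symm_apply]
    have hgv : f (g v) = k x := by rw [hv]; simp [Equiv.Perm.coe_inv, Equiv.apply_symm_apply]
    have hB := lemmaV hQ hg hf u v
    rw [hgu, hgv] at hB
    -- hB : joinQuad (x, x, x, g (f u)) (k x, k x, k x, g (f v)) ∈ Q
    have hvert : (x, x, x, g (f u)) ∈ P := by
      have := vertP hQ hg hf u
      rwa [hgu] at this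
    have hk1 : (k x, k x, k x, k (g (f u))) ∈ P := (hk _ hvert).1
    have hk2 : joinQuad (k x, k x, k x, k (g (f u))) (x, x, x, g (f u)) ∈ Q := (hk _ hvert).2
    have hT : joinQuad (k x, k x, k x, k (g (f u))) (k x, k x, k x, g (f v)) ∈ Q :=
      Qtrans hQ hk2 hB
    have hD : joinQuad (k x, k x, k x, k (g (f u))) (k x, k x, k x, k (g (f u))) ∈ Q :=
      Qdiag hQ hk1
    have huniq := h.2 (k x) (k x) (k x) (k (g (f u))) (k x) (k x) (k x) hk1
      (Prefl hQ.1 (k x) (k x)) (Prefl hQ.1 (k x) (k x))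
    exact huniq.unique hT hD
  ext x
  simp only [commutatorElement_def, Equiv.Perm.mul_apply]
  exact (key x).symm

end Aux

/-- The structure group of a strong parallelepiped structure is a group,
and it is `2`-step nilpotent: its second commutator subgroup `[𝒢,[𝒢,𝒢]]` is trivial. -/
theorem structure_group_two_step_nilpotent (X : Type) [Nonempty X]
    (P : Set (Quad X)) (Q : Set (Cube X)) (h : IsStrongParallelepiped P Q) :
    (∃ H : Subgroup (Equiv.Perm X), (H : Set (Equiv.Perm X)) = structSet P Q) ∧
    (∀ H : Subgroup (Equiv.Perm X), (H : Set (Equiv.Perm X)) = structSet P Q →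
      ⁅H, ⁅H, H⁆⁆ = ⊥) := by
  have hQ := h.1
  constructor
  · exact ⟨{ carrier := structSet P Q
             one_mem' := structSet_one hQ
             mul_mem' := fun hg hk => structSet_mul hQ hg hk
             inv_mem' := fun hg => structSet_inv hQ hg }, rfl⟩
  · intro H hH
    have hmem : ∀ g : Equiv.Perm X, g ∈ H ↔ g ∈ structSet P Q := by
      intro g
      constructor
      · intro hg
        rw [← hH]
        exact hg
      · intro hg
        have : g ∈ (H : Set (Equiv.Perm X)) := by rw [hH]; exact hg
        exact this
    rw [Subgroup.commutator_eq_bot_iff_le_centralizer]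
    intro k hk
    rw [Subgroup.mem_centralizer_iff]
    intro m hm
    have hsub : ⁅H, H⁆ ≤ Subgroup.centralizer {k} := by
      rw [Subgroup.commutator_le]
      intro g hgH f hfH
      rw [Subgroup.mem_centralizer_iff]
      intro y hy
      have hyk : y = k := hy
      rw [hyk]
      exact comm_central h ((hmem g).1 hgH) ((hmem f).1 hfH) ((hmem k).1 hk)
    have hm' : m ∈ ⁅H, H⁆ := hm
    have := hsub hm'
    rw [Subgroup.mem_centralizer_iff] at this
    exact (this k rfl).symm

end HK
end

section
/- Let (𝒫,𝒬) be a strong parallelepiped structure on a nonempty set X, with fiber group F. For every x ∈ X and u ∈ F there is a unique point y ∈ X with (x,x,x,y) ∈ 𝒫 and [x,x,x,y] = u; denote it u·x. Then the map (u,x) ↦ u·x is an action of the abelian group F on X; this action maps each fiber of π to itself, and it acts freely and transitively on each fiber. -/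
open scoped Pointwise

namespace HK

variable {X Y : Type}

section AuxProof

variable {X' : Type}

lemma face_join (p q : Quad X') : face (joinQuad p q) 0 false = p := rfl

/-- The permutation of `Fin 3` swapping `0` and `1`. -/
def perm01 : Equiv.Perm (Fin 3) := ⟨![1, 0, 2], ![1, 0, 2], by decide, by decide⟩

/-- The permutation of `Fin 3` swapping `0` and `2`. -/
def perm02 : Equiv.Perm (Fin 3) := ⟨![2, 1, 0], ![2, 1, 0], by decide, by decide⟩

/-- The permutation of `Fin 3` swapping `1` and `2`. -/
def perm12 : Equiv.Perm (Fin 3) := ⟨![0, 2, 1], ![0, 2, 1], by decide, by decide⟩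

lemma flip1_eq (a b c d a' b' c' d' : X') :
    (fun v => joinQuad (a, b, c, d) (a', b', c', d') (cubeSym perm01 (fun _ => false) v))
      = joinQuad (a, b, a', b') (c, d, c', d') := by
  funext v
  cases h0 : v 0 <;> cases h1 : v 1 <;> cases h2 : v 2 <;>
    simp [joinQuad, cubeSym, perm01, quadAt, h0, h1, h2]

lemma flip2_eq (a b c d a' b' c' d' : X') :
    (fun v => joinQuad (a, b, c, d) (a', b', c', d') (cubeSym perm02 (fun _ => false) v))
      = joinQuad (a, a', c, c') (b, b', d, d') := by
  funext v
  cases h0 : v 0 <;> cases h1 : v 1 <;> cases h2 : v 2 <;>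
    simp [joinQuad, cubeSym, perm02, quadAt, h0, h1, h2]

lemma exch_eq (a b c d a' b' c' d' : X') :
    (fun v => joinQuad (a, b, c, d) (a', b', c', d') (cubeSym perm12 (fun _ => false) v))
      = joinQuad (a, c, b, d) (a', c', b', d') := by
  funext v
  cases h0 : v 0 <;> cases h1 : v 1 <;> cases h2 : v 2 <;>
    simp [joinQuad, cubeSym, perm12, quadAt, h0, h1, h2]

lemma swapin_eq (a b c d a' b' c' d' : X') :
    (fun v => joinQuad (a, b, c, d) (a', b', c', d')
        (cubeSym (Equiv.refl (Fin 3)) ![false, false, true] v))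
      = joinQuad (b, a, d, c) (b', a', d', c') := by
  funext v
  cases h0 : v 0 <;> cases h1 : v 1 <;> cases h2 : v 2 <;>
    simp [joinQuad, cubeSym, quadAt, h0, h1, h2]

variable {Q' : Set (Cube X')}

lemma flip1Q (hsym : ∀ (σ : Equiv.Perm (Fin 3)) (c : Vtx), ∀ x ∈ Q', (fun v => x (cubeSym σ c v)) ∈ Q')
    {a b c d a' b' c' d' : X'} (h : joinQuad (a, b, c, d) (a', b', c', d') ∈ Q') :
    joinQuad (a, b, a', b') (c, d, c', d') ∈ Q' := by
  have h' := hsym perm01 (fun _ => false) _ h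
  rwa [flip1_eq] at h'

lemma flip2Q (hsym : ∀ (σ : Equiv.Perm (Fin 3)) (c : Vtx), ∀ x ∈ Q', (fun v => x (cubeSym σ c v)) ∈ Q')
    {a b c d a' b' c' d' : X'} (h : joinQuad (a, b, c, d) (a', b', c', d') ∈ Q') :
    joinQuad (a, a', c, c') (b, b', d, d') ∈ Q' := by
  have h' := hsym perm02 (fun _ => false) _ h
  rwa [flip2_eq] at h'

lemma exchQ (hsym : ∀ (σ : Equiv.Perm (Fin 3)) (c : Vtx), ∀ x ∈ Q', (fun v => x (cubeSym σ c v)) ∈ Q')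
    {a b c d a' b' c' d' : X'} (h : joinQuad (a, b, c, d) (a', b', c', d') ∈ Q') :
    joinQuad (a, c, b, d) (a', c', b', d') ∈ Q' := by
  have h' := hsym perm12 (fun _ => false) _ h
  rwa [exch_eq] at h'

lemma swapinQ (hsym : ∀ (σ : Equiv.Perm (Fin 3)) (c : Vtx), ∀ x ∈ Q', (fun v => x (cubeSym σ c v)) ∈ Q')
    {a b c d a' b' c' d' : X'} (h : joinQuad (a, b, c, d) (a', b', c', d') ∈ Q') :
    joinQuad (b, a, d, c) (b', a', d', c') ∈ Q' := by
  have h' := hsym (Equiv.refl (Fin 3)) ![false, false, true] _ h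
  rwa [swapin_eq] at h'

end AuxProof

/-- For a strong parallelepiped structure with basepoint `i`: any four
points of one fiber form a parallelogram; for every `x` and every class `u = [w]` of a
vertical parallelogram there is a unique `y = u·x` with `[x,x,x,y] = u`; this defines an
action of the (abelian) fiber group `F` on `X` (it is well defined on classes, the trivial
class acts as the identity, and it is compatible with the multiplication of `F`); the action
maps each fiber to itself, and it is transitive and free on each fiber. -/
theorem fiber_group_action (X : Type) [Nonempty X]
    (P : Set (Quad X)) (Q : Set (Cube X)) (h : IsStrongParallelepiped P Q) (i : X) :
    (∀ w : Quad X, VerticalQ P i w → w ∈ P) ∧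
    (∀ (w : Quad X) (x : X), VerticalQ P i w → ∃! y, actsRel P Q w x y) ∧
    (∀ (w w' : Quad X) (x y : X), VerticalQ P i w → VerticalQ P i w' →
      joinQuad w w' ∈ Q → actsRel P Q w x y → actsRel P Q w' x y) ∧
    (∀ x a : X, actsRel P Q (a, a, a, a) x x) ∧
    (∀ a b c d e f x y z : X,
      sameFiber P i a b → sameFiber P i b c → sameFiber P i c d →
      sameFiber P i d e → sameFiber P i e f →
      actsRel P Q (c, d, e, f) x y → actsRel P Q (a, b, c, d) y z →
      actsRel P Q (a, b, e, f) x z) ∧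
    (∀ (w : Quad X) (x y : X), VerticalQ P i w → actsRel P Q w x y → sameFiber P i x y) ∧
    (∀ x y : X, sameFiber P i x y → ∃ w : Quad X, VerticalQ P i w ∧ actsRel P Q w x y) ∧
    (∀ (w w' : Quad X) (x y : X), VerticalQ P i w → VerticalQ P i w' →
      actsRel P Q w x y → actsRel P Q w' x y → joinQuad w w' ∈ Q) := by
  obtain ⟨hW, huniq⟩ := h
  obtain ⟨hP, hface, hsym, hreflQ, hswap, htransQ, _hcompl⟩ := hW
  obtain ⟨prefl, psymm, ptrans, pexch, _pcompl⟩ := hP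
  -- basic parallelogram facts
  have pp : ∀ a : X, (i, i, a, a) ∈ P := fun a => pexch _ _ _ _ (prefl i a)
  have diag : ∀ {a b : X}, sameFiber P i a b → (i, i, a, b) ∈ P :=
    fun h => pexch _ _ _ _ h
  have mem4 : ∀ {a b c d : X}, (i, i, a, b) ∈ P → (i, i, c, d) ∈ P → (a, b, c, d) ∈ P :=
    fun h1 h2 => ptrans _ _ _ _ _ _ (psymm _ _ _ _ h1) h2
  have sfsymm : ∀ {a b : X}, sameFiber P i a b → sameFiber P i b a :=
    fun h => psymm _ _ _ _ h
  have sftrans : ∀ {a b c : X}, sameFiber P i a b → sameFiber P i b c → sameFiber P i a c :=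
    fun h1 h2 => ptrans _ _ _ _ _ _ h1 h2
  have sfOf : ∀ {x y : X}, (x, x, x, y) ∈ P → sameFiber P i x y :=
    fun {x y} hxy => pexch _ _ _ _ (ptrans _ _ _ _ _ _ (pp x) hxy)
  -- the key lemma: (p,q,p,r) ≈ (q,q,q,r)
  have C2 : ∀ p q r : X, sameFiber P i p q → sameFiber P i q r →
      joinQuad (p, q, p, r) (q, q, q, r) ∈ Q := by
    intro p q r hpq hqr
    have h1 : (p, q, q, q) ∈ P := mem4 (diag hpq) (pp q)
    have h2 : (q, q, r, q) ∈ P := mem4 (pp q) (diag (sfsymm hqr))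
    have a1 : joinQuad (p, q, p, q) (q, q, q, q) ∈ Q := flip1Q hsym (hreflQ _ h1)
    have a2 : joinQuad (q, q, r, r) (q, q, q, q) ∈ Q := flip2Q hsym (hreflQ _ h2)
    have a3 : joinQuad (p, q, p, q) (q, q, r, r) ∈ Q := htransQ _ _ _ a1 (hswap _ _ a2)
    exact flip2Q hsym a3
  refine ⟨?_, ?_, ?_, ?_, ?_, ?_, ?_, ?_⟩
  · -- (1) vertical quadruples are parallelograms
    rintro w ⟨s1, _s2, s3⟩
    exact mem4 (diag s1) (diag s3)
  · -- (2) existence and uniqueness of the action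
    rintro w x ⟨s1, s2, s3⟩
    have hwP : (w.1, w.2.1, w.2.2.1, w.2.2.2) ∈ P := mem4 (diag s1) (diag s3)
    have h13 : (w.1, w.2.2.1, x, x) ∈ P := mem4 (diag (sftrans s1 s2)) (pp x)
    have h12 : (w.1, w.2.1, x, x) ∈ P := mem4 (diag s1) (pp x)
    obtain ⟨t, ht, htu⟩ := huniq w.1 w.2.1 w.2.2.1 w.2.2.2 x x x hwP h13 h12
    have ht' : joinQuad (x, x, x, t) w ∈ Q := hswap _ _ ht
    refine ⟨t, ⟨?_, ht'⟩, ?_⟩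
    · have hf := hface _ ht' 0 false
      rwa [face_join] at hf
    · rintro y ⟨_hyP, hyQ⟩
      exact htu y (hswap _ _ hyQ)
  · -- (3) well-definedness on classes
    rintro w w' x y _ _ hww' ⟨h1, h2⟩
    exact ⟨h1, htransQ _ _ _ h2 hww'⟩
  · -- (4) trivial class acts as identity
    intro x a
    exact ⟨prefl x x, flip2Q hsym (hreflQ _ (prefl x a))⟩
  · -- (5) compatibility with multiplication
    rintro a b c d e f x y z hab hbc hcd hde hef ⟨hxyP, hxyQ⟩ ⟨hyzP, hyzQ⟩
    have sfxy := sfOf hxyP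
    have sfyz := sfOf hyzP
    have c3 : joinQuad (x, x, y, z) (y, y, y, z) ∈ Q := exchQ hsym (C2 x y z sfxy sfyz)
    have first : joinQuad (x, x, y, z) (a, b, c, d) ∈ Q := htransQ _ _ _ c3 hyzQ
    have c2' : joinQuad (y, z, x, z) (y, y, x, y) ∈ Q :=
      swapinQ hsym (C2 z y x (sfsymm sfyz) (sfsymm sfxy))
    have c5 : joinQuad (y, y, x, y) (x, x, x, y) ∈ Q :=
      exchQ hsym (C2 y x y (sfsymm sfxy) sfxy)
    have second : joinQuad (y, z, x, z) (c, d, e, f) ∈ Q :=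
      htransQ _ _ _ (htransQ _ _ _ c2' c5) hxyQ
    have g : joinQuad (x, x, x, z) (a, b, e, f) ∈ Q :=
      flip1Q hsym (htransQ _ _ _ (flip1Q hsym first) (flip1Q hsym second))
    exact ⟨mem4 (pp x) (diag (sftrans sfxy sfyz)), g⟩
  · -- (6) the action preserves fibers
    rintro w x y _ ⟨h1, _⟩
    exact sfOf h1
  · -- (7) transitivity on fibers
    intro x y hxy
    have hxyP : (x, x, x, y) ∈ P := mem4 (pp x) (diag hxy)
    exact ⟨(x, x, x, y), ⟨prefl i x, prefl i x, hxy⟩, hxyP, hreflQ _ hxyP⟩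
  · -- (8) freeness
    rintro w w' x y _ _ ⟨_, h1⟩ ⟨_, h2⟩
    exact htransQ _ _ _ (hswap _ _ h1) h2

end HK
end

section
/- Let (𝒫,𝒬) be a strong parallelepiped structure on a nonempty set X with base B, and let s ∈ B. Set X_s = {(x,y) ∈ X² : ⟨x,y⟩ = s} and, under the identification of X^{[3]} = X⁸ with (X²)⁴ given by grouping coordinates in consecutive pairs, set 𝒬_s = 𝒬 ∩ (X_s)⁴ = {x ∈ 𝒬 : ⟨x000,x001⟩ = s}. Then 𝒬_s is a weak parallelogram structure on the set X_s. -/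
open scoped Pointwise

namespace HK

variable {X Y : Type}

private lemma join_swap_middle {X : Type} (Q : Set (Cube X))
    (hsym : ∀ (σ : Equiv.Perm (Fin 3)) (c : Vtx), ∀ x ∈ Q, (fun v => x (cubeSym σ c v)) ∈ Q)
    (a1 a2 b1 b2 c1 c2 d1 d2 : X)
    (h : joinQuad (a1, a2, b1, b2) (c1, c2, d1, d2) ∈ Q) :
    joinQuad (a1, a2, c1, c2) (b1, b2, d1, d2) ∈ Q := by
  have key : joinQuad (a1, a2, c1, c2) (b1, b2, d1, d2) =
      fun v => joinQuad (a1, a2, b1, b2) (c1, c2, d1, d2)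
        (cubeSym (Equiv.swap 0 1) (fun _ => false) v) := by
    funext v
    cases hv0 : v 0 <;> cases hv1 : v 1 <;> cases hv2 : v 2 <;>
      simp [joinQuad, quadAt, cubeSym, hv0, hv1, hv2, Equiv.swap_apply_def]
  rw [key]
  exact hsym (Equiv.swap 0 1) (fun _ => false) _ h

private lemma face_join_one_true {X : Type} (p q : Quad X) :
    face (joinQuad p q) 1 true = (p.2.2.1, p.2.2.2, q.2.2.1, q.2.2.2) := rfl

/-- For a strong parallelepiped structure `(P, Q)` on `X` and `s = ⟨a,b⟩`
in the base, the set `𝒬_s = 𝒬 ∩ (X_s)^{[2]}` (under the identification of `X⁸` with `(X²)⁴`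
by grouping consecutive pairs) is a weak parallelogram structure on
`X_s = {(x,y) : ⟨x,y⟩ = s}`. -/
theorem Qs_is_parallelogram_structure (X : Type) [Nonempty X]
    (P : Set (Quad X)) (Q : Set (Cube X)) (h : IsStrongParallelepiped P Q) (a b : X) :
    IsWeakParallelogram
      {q : Quad {p : X × X // (a, b, p.1, p.2) ∈ P} |
        joinQuad (q.1.1.1, q.1.1.2, q.2.1.1.1, q.2.1.1.2)
          (q.2.2.1.1.1, q.2.2.1.1.2, q.2.2.2.1.1, q.2.2.2.1.2) ∈ Q} := by
  obtain ⟨⟨hP, hface, hsym, hrefl, hsymm, htrans, hcomp⟩, _⟩ := h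
  have hmem : ∀ u v : {p : X × X // (a, b, p.1, p.2) ∈ P},
      (u.1.1, u.1.2, v.1.1, v.1.2) ∈ P := fun u v =>
    hP.2.2.1 _ _ _ _ _ _ (hP.2.1 _ _ _ _ u.2) v.2
  refine ⟨?_, ?_, ?_, ?_, ?_⟩
  · intro u v
    exact hrefl _ (hmem u v)
  · intro u v w z hq
    exact hsymm _ _ hq
  · intro u v w z r t h1 h2
    exact htrans _ _ _ h1 h2
  · intro u v w z hq
    exact join_swap_middle Q hsym _ _ _ _ _ _ _ _ hq
  · intro u v w
    obtain ⟨x110, hx110⟩ := hP.2.2.2.2 u.1.1 v.1.1 w.1.1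
    obtain ⟨x111, hx111⟩ := hcomp u.1.1 u.1.2 v.1.1 v.1.2 w.1.1 w.1.2 x110
      (hmem u v) hx110 (hmem u w)
    have hface1 : (v.1.1, v.1.2, x110, x111) ∈ P := by
      have := hface _ hx111 1 true
      rwa [face_join_one_true] at this
    exact ⟨⟨(x110, x111), hP.2.2.1 _ _ _ _ _ _ v.2 hface1⟩, hx111⟩

end HK
end
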